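/- arXiv:0909.3344 — 6 statements merged into one kernel-verified Lean document; each statement's English description precedes it below -/
import Mathlib

section
/- For a finite point set X in the plane and a point x in X, and any k ≥ 1, there are at most 8k points z ∈ X \ {x} such that x is among the k nearest neighbors of z in X \ {z} (i.e., at most k points of X \ {z} are strictly closer to z than x is, using Euclidean distance, with ties broken consistently). More precisely: within any cone with apex x and central angle π/4, at most k points of X can have x among their k nearest neighbors, and 8 such cones cover the plane. -/
open Finset

open Real Complex in
/-- Cone lemma: if `u` is nonzero, no longer than `v`, and the angle between them is
less than `π/4` (in fact `< π/3` suffices), then `u` is strictly closer to `v` than `0` is. -/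
lemma cone_key (u v : ℂ) (hu : u ≠ 0) (hle : ‖u‖ ≤ ‖v‖)
    (hang : |Complex.arg u - Complex.arg v| < π / 4) :
    ‖u - v‖ < ‖v‖ := by
  have hu0 : 0 < ‖u‖ := norm_pos_iff.mpr hu
  have hv0 : 0 < ‖v‖ := lt_of_lt_of_le hu0 hle
  have hpi : 0 < π := Real.pi_pos
  have hcos : (1 : ℝ) / 2 < Real.cos (Complex.arg u - Complex.arg v) := by
    have h1 : Real.cos (π / 3) < Real.cos |Complex.arg u - Complex.arg v| := by
      apply Real.cos_lt_cos_of_nonneg_of_le_pi (abs_nonneg _)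
      · linarith
      · nlinarith
    rw [Real.cos_abs] at h1
    rw [Real.cos_pi_div_three] at h1
    linarith
  have hv0' : v ≠ 0 := by
    intro h; rw [h] at hv0; simp at hv0
  have hure : u.re = ‖u‖ * Real.cos (Complex.arg u) := by
    rw [Complex.cos_arg hu]; field_simp
  have huim : u.im = ‖u‖ * Real.sin (Complex.arg u) := by
    rw [Complex.sin_arg]; field_simp
  have hvre : v.re = ‖v‖ * Real.cos (Complex.arg v) := by
    rw [Complex.cos_arg hv0']; field_simp
  have hvim : v.im = ‖v‖ * Real.sin (Complex.arg v) := by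
    rw [Complex.sin_arg]; field_simp
  have hsq : ‖u - v‖ ^ 2 < ‖v‖ ^ 2 := by
    rw [Complex.sq_norm, Complex.sq_norm, Complex.normSq_apply, Complex.normSq_apply]
    simp only [Complex.sub_re, Complex.sub_im]
    rw [Real.cos_sub] at hcos
    set A := ‖u‖
    set B := ‖v‖
    set ca := Real.cos (Complex.arg u)
    set sa := Real.sin (Complex.arg u)
    set cb := Real.cos (Complex.arg v)
    set sb := Real.sin (Complex.arg v)
    have h2 : ca ^ 2 + sa ^ 2 = 1 := by
      rw [add_comm]; exact Real.sin_sq_add_cos_sq _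
    have h3 : cb ^ 2 + sb ^ 2 = 1 := by
      rw [add_comm]; exact Real.sin_sq_add_cos_sq _
    rw [hure, huim, hvre, hvim]
    nlinarith [mul_pos hu0 hv0, mul_le_mul_of_nonneg_left hle (le_of_lt hu0),
      mul_nonneg (mul_pos hu0 hv0).le (sub_nonneg.mpr hcos.le)]
  exact lt_of_pow_lt_pow_left₀ 2 (norm_nonneg v) hsq

open Real in
/-- Two angles in the same `π/4`-sector differ by less than `π/4`. -/
lemma bucket_close (a b : ℝ)
    (h : ⌈(a + π) * (4 / π)⌉ = ⌈(b + π) * (4 / π)⌉) : |a - b| < π / 4 := by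
  have hpi : 0 < π := Real.pi_pos
  set t1 := (a + π) * (4 / π) with ht1
  set t2 := (b + π) * (4 / π) with ht2
  have h1 : t1 ≤ (⌈t1⌉ : ℝ) := Int.le_ceil t1
  have h2 : (⌈t1⌉ : ℝ) < t1 + 1 := Int.ceil_lt_add_one t1
  have h3 : t2 ≤ (⌈t2⌉ : ℝ) := Int.le_ceil t2
  have h4 : (⌈t2⌉ : ℝ) < t2 + 1 := Int.ceil_lt_add_one t2
  have heq : (⌈t1⌉ : ℝ) = (⌈t2⌉ : ℝ) := by exact_mod_cast h
  have hd : |t1 - t2| < 1 := by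
    rw [abs_lt]; constructor <;> linarith
  have hab : a - b = (t1 - t2) * (π / 4) := by
    rw [ht1, ht2]; field_simp; ring
  rw [hab, abs_mul, abs_of_pos (by positivity : (0:ℝ) < π / 4)]
  calc |t1 - t2| * (π / 4) < 1 * (π / 4) := by
        apply mul_lt_mul_of_pos_right hd; positivity
    _ = π / 4 := by ring

/-- For a finite point set `X` in the plane (modeled as `ℂ` with the
Euclidean distance), a point `x ∈ X` and `k ≥ 1`, there are at most `8k` points
`z ∈ X \ {x}` such that `x` is among the `k` nearest neighbors of `z` in `X \ {z}`,
i.e. at most `k - 1` points of `X \ {z}` are strictly closer to `z` than `x` is. -/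
theorem nearest_neighbor_bound (X : Finset ℂ) (x : ℂ) (hx : x ∈ X) (k : ℕ) (hk : 1 ≤ k) :
    ((X.erase x).filter (fun z =>
        ((X.erase z).filter (fun w => dist w z < dist x z)).card ≤ k - 1)).card ≤ 8 * k := by
  classical
  set S := (X.erase x).filter (fun z =>
      ((X.erase z).filter (fun w => dist w z < dist x z)).card ≤ k - 1) with hS
  set g : ℂ → ℤ := fun w => ⌈(Complex.arg (w - x) + Real.pi) * (4 / Real.pi)⌉ with hg
  have hpi : 0 < Real.pi := Real.pi_pos
  -- each fiber of g on S has at most k elements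
  have hfiber : ∀ m ∈ S.image g, (S.filter fun z => g z = m).card ≤ k := by
    intro m _
    by_contra hcon
    push_neg at hcon
    set T := S.filter fun z => g z = m with hT
    have hTne : T.Nonempty := Finset.card_pos.mp (by omega)
    obtain ⟨z, hzT, hzmax⟩ := T.exists_max_image (fun w => ‖w - x‖) hTne
    have hzS : z ∈ S := (Finset.mem_filter.mp hzT).1
    have hzX : z ∈ X.erase x := (Finset.mem_filter.mp hzS).1
    have hzx : z ≠ x := (Finset.mem_erase.mp hzX).1
    have hzcount : ((X.erase z).filter (fun w => dist w z < dist x z)).card ≤ k - 1 :=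
      (Finset.mem_filter.mp hzS).2
    have hsub : T.erase z ⊆ (X.erase z).filter (fun w => dist w z < dist x z) := by
      intro w hw
      have hwz : w ≠ z := (Finset.mem_erase.mp hw).1
      have hwT : w ∈ T := (Finset.mem_erase.mp hw).2
      have hwS : w ∈ S := (Finset.mem_filter.mp hwT).1
      have hwX : w ∈ X.erase x := (Finset.mem_filter.mp hwS).1
      have hwx : w ≠ x := (Finset.mem_erase.mp hwX).1
      refine Finset.mem_filter.mpr ⟨Finset.mem_erase.mpr ⟨hwz, (Finset.mem_erase.mp hwX).2⟩, ?_⟩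
      -- dist w z < dist x z by the cone lemma
      have hgw : g w = m := (Finset.mem_filter.mp hwT).2
      have hgz : g z = m := (Finset.mem_filter.mp hzT).2
      have hang : |Complex.arg (w - x) - Complex.arg (z - x)| < Real.pi / 4 :=
        bucket_close _ _ (hgw.trans hgz.symm)
      have hune : w - x ≠ 0 := sub_ne_zero.mpr hwx
      have hle : ‖w - x‖ ≤ ‖z - x‖ := hzmax w hwT
      have hkey := cone_key (w - x) (z - x) hune hle hang
      have h1 : w - x - (z - x) = w - z := by ring
      rw [h1] at hkey
      have hd1 : dist w z = ‖w - z‖ := Complex.dist_eq w z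
      have hd2 : dist x z = ‖z - x‖ := by
        rw [Complex.dist_eq, show x - z = -(z - x) by ring, norm_neg]
      rw [hd1, hd2]; exact hkey
    have hcard : T.card - 1 ≤ ((X.erase z).filter (fun w => dist w z < dist x z)).card := by
      calc T.card - 1 = (T.erase z).card := (Finset.card_erase_of_mem hzT).symm
        _ ≤ _ := Finset.card_le_card hsub
    omega
  have hmain : S.card ≤ k * (S.image g).card :=
    Finset.card_le_mul_card_image S k hfiber
  have himg : (S.image g).card ≤ 8 := by
    have hsub : S.image g ⊆ Finset.Icc (1 : ℤ) 8 := by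
      intro m hm
      obtain ⟨z, hzS, hzm⟩ := Finset.mem_image.mp hm
      rw [Finset.mem_Icc, ← hzm, hg]
      constructor
      · have harg : -Real.pi < Complex.arg (z - x) := Complex.neg_pi_lt_arg _
        have : (0 : ℝ) < (Complex.arg (z - x) + Real.pi) * (4 / Real.pi) := by
          apply mul_pos (by linarith) (by positivity)
        exact Int.ceil_pos.mpr this
      · have harg : Complex.arg (z - x) ≤ Real.pi := Complex.arg_le_pi _
        have h8 : (Complex.arg (z - x) + Real.pi) * (4 / Real.pi) ≤ 8 := by
          have h4 : (4 : ℝ) / Real.pi * Real.pi = 4 := by field_simp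
          nlinarith [mul_nonneg (sub_nonneg.mpr harg) (le_of_lt (div_pos (by norm_num : (0:ℝ) < 4) hpi))]
        exact Int.ceil_le.mpr (by exact_mod_cast h8)
    calc (S.image g).card ≤ (Finset.Icc (1 : ℤ) 8).card := Finset.card_le_card hsub
      _ = 8 := by decide
  calc S.card ≤ k * (S.image g).card := hmain
    _ ≤ k * 8 := Nat.mul_le_mul_left k himg
    _ = 8 * k := Nat.mul_comm k 8
end

section
/- Let (j_n) be a sequence of positive integers with j_n → ∞ and j_n/n → 0, let t ∈ ℝ, and let p_n ∈ (0,1) satisfy (j_n − n p_n)/√(n p_n) → t. Then √(j_n) · β_{n,p_n}(j_n) → φ(t), where φ is the standard normal density. -/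
open Filter Real

/-- The binomial probability `β_{n,p}(k) = C(n,k) p^k (1-p)^(n-k)`. -/
noncomputable def binomProb (n : ℕ) (p : ℝ) (k : ℕ) : ℝ :=
  (n.choose k : ℝ) * p ^ k * (1 - p) ^ (n - k)

open Stirling Topology

lemma aux_log_bound {u : ℝ} (hu : |u| ≤ 1/2) : |Real.log (1+u) - u| ≤ 2 * u^2 := by
  have h1 : |(-u)| < 1 := by rw [abs_neg]; linarith
  have h := Real.abs_log_sub_add_sum_range_le h1 1
  simp only [Finset.sum_range_one, pow_one, Nat.cast_zero, zero_add, div_one, sub_neg_eq_add,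
    abs_neg] at h
  calc |Real.log (1+u) - u| = |-u + Real.log (1 + u)| := by congr 1; ring
    _ ≤ |u| ^ (1+1) / (1 - |u|) := h
    _ ≤ 2 * u^2 := by
        rw [show (1+1) = 2 from rfl, sq_abs, div_le_iff₀ (by linarith)]
        nlinarith [sq_nonneg u, abs_nonneg u]

lemma F_bound {u : ℝ} (hu : |u| ≤ 1/2) :
    |(1+u) * Real.log (1+u) - u - u^2/2| ≤ 2 * |u|^3 := by
  set f : ℝ → ℝ := fun w => (1+w) * Real.log (1+w) - w - w^2/2 with hf
  have habs : ∀ w ∈ Set.uIcc (0:ℝ) u, |w| ≤ |u| := by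
    intro w hw
    rcases Set.mem_uIcc.mp hw with ⟨h1, h2⟩ | ⟨h1, h2⟩
    · rw [abs_of_nonneg h1]; exact h2.trans (le_abs_self u)
    · rw [abs_of_nonpos h2]; exact (neg_le_neg h1).trans (neg_le_abs u)
  have key : ∀ w ∈ Set.uIcc (0:ℝ) u, HasDerivAt f (Real.log (1+w) - w) w := by
    intro w hw
    have hw2 : |w| ≤ 1/2 := (habs w hw).trans hu
    have hw3 : (0:ℝ) < 1 + w := by
      rcases abs_le.mp hw2 with ⟨h1, _⟩; linarith
    have d1 : HasDerivAt (fun w : ℝ => 1 + w) 1 w := by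
      simpa using (hasDerivAt_id w).const_add (1:ℝ)
    have d2 : HasDerivAt (fun w : ℝ => Real.log (1+w)) ((1+w)⁻¹) w := by
      have h := (Real.hasDerivAt_log hw3.ne').comp w d1; rw [mul_one] at h; exact h
    have d3 := d1.mul d2
    have d4 := (d3.sub (hasDerivAt_id w)).sub ((hasDerivAt_pow 2 w).div_const 2)
    have d5 : HasDerivAt f _ w := d4
    convert d5 using 1
    field_simp
    norm_num
    ring
  have bound : ∀ w ∈ Set.uIcc (0:ℝ) u, ‖Real.log (1+w) - w‖ ≤ 2 * u^2 := by
    intro w hw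
    have hw2 : |w| ≤ 1/2 := (habs w hw).trans hu
    calc ‖Real.log (1+w) - w‖ ≤ 2 * w^2 := aux_log_bound hw2
      _ ≤ 2 * u^2 := by nlinarith [habs w hw, abs_nonneg w, sq_abs w, sq_abs u,
          mul_self_le_mul_self (abs_nonneg w) (habs w hw)]
  have := (convex_uIcc (0:ℝ) u).norm_image_sub_le_of_norm_hasDerivWithin_le
    (fun w hw => (key w hw).hasDerivWithinAt) bound Set.left_mem_uIcc Set.right_mem_uIcc
  have hf0 : f 0 = 0 := by simp [hf]
  rw [hf0, sub_zero, sub_zero] at this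
  calc |f u| ≤ 2 * u^2 * ‖u‖ := this
    _ = 2 * |u|^3 := by rw [Real.norm_eq_abs, ← sq_abs]; ring

set_option maxHeartbeats 1600000 in
/-- If `j_n → ∞`, `j_n/n → 0`, `p_n ∈ (0,1)` and
`(j_n - n p_n)/√(n p_n) → t`, then `√(j_n) β_{n,p_n}(j_n) → φ(t)`, the standard normal
density at `t`. -/
theorem sqrt_mul_binomProb_tendsto_gaussian (j : ℕ → ℕ) (p : ℕ → ℝ) (t : ℝ)
    (hjpos : ∀ n, 0 < j n)
    (hj : Tendsto (fun n => (j n : ℝ)) atTop atTop)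
    (hjn : Tendsto (fun n => (j n : ℝ) / n) atTop (nhds 0))
    (hp : ∀ n, p n ∈ Set.Ioo (0:ℝ) 1)
    (ht : Tendsto (fun n => ((j n : ℝ) - n * p n) / Real.sqrt (n * p n)) atTop (nhds t)) :
    Tendsto (fun n => Real.sqrt (j n) * binomProb n (p n) (j n)) atTop
      (nhds ((1 / Real.sqrt (2 * π)) * Real.exp (- t ^ 2 / 2))) := by
  have hπ : 0 < π := Real.pi_pos
  set m : ℕ → ℝ := fun n => (n:ℝ) * p n with hmdef
  set x : ℕ → ℝ := fun n => ((j n : ℝ) - m n) / Real.sqrt (m n) with hxdef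
  set u : ℕ → ℝ := fun n => ((j n : ℝ) - m n) / m n with hudef
  set v : ℕ → ℝ := fun n => ((j n : ℝ) - m n) / ((n:ℝ) - m n) with hvdef
  have ht' : Tendsto x atTop (𝓝 t) := ht
  have hm_pos : ∀ n : ℕ, 1 ≤ n → 0 < m n := by
    intro n hn
    have h1 := (hp n).1
    have h2 : (0:ℝ) < n := by exact_mod_cast hn
    exact mul_pos h2 h1
  have hm_lt : ∀ n : ℕ, 1 ≤ n → m n < n := by
    intro n hn
    have h2 : (0:ℝ) < n := by exact_mod_cast hn
    have := (hp n).2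
    calc m n = n * p n := rfl
      _ < n * 1 := by exact mul_lt_mul_of_pos_left this h2
      _ = n := mul_one _
  -- |x| eventually bounded
  have hxb : ∀ᶠ n in atTop, |x n| ≤ |t| + 1 := by
    have h := Metric.tendsto_nhds.mp ht' 1 one_pos
    filter_upwards [h] with n hn
    rw [Real.dist_eq] at hn
    have := abs_sub_abs_le_abs_sub (x n) t
    linarith
  -- m → ∞
  have hmtop : Tendsto m atTop atTop := by
    have C := |t| + 1
    set C := |t| + 1 with hC
    have hC0 : 0 < 1 + C := by positivity
    have hlim : Tendsto (fun n => ((j n : ℝ) - C) / (1 + C)) atTop atTop := by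
      have := tendsto_atTop_add_const_right atTop (-C) hj
      simpa [sub_eq_add_neg] using this.atTop_div_const hC0
    apply tendsto_atTop_mono' atTop _ hlim
    filter_upwards [hxb, eventually_ge_atTop 1] with n hxn hn1
    have hm0 := hm_pos n hn1
    have hsqle : Real.sqrt (m n) ≤ 1 + m n := by
      have h1 : Real.sqrt (m n) ≤ Real.sqrt ((1 + m n)^2) := by
        apply Real.sqrt_le_sqrt; nlinarith
      rwa [Real.sqrt_sq (by positivity)] at h1
    have hxs : x n * Real.sqrt (m n) = (j n : ℝ) - m n := by
      rw [hxdef]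
      exact div_mul_cancel₀ _ (Real.sqrt_pos.mpr hm0).ne'
    have hb : (j n : ℝ) - m n ≤ C * (1 + m n) := by
      calc (j n : ℝ) - m n = x n * Real.sqrt (m n) := hxs.symm
        _ ≤ |x n| * Real.sqrt (m n) := by
            apply mul_le_mul_of_nonneg_right (le_abs_self _) (Real.sqrt_nonneg _)
        _ ≤ C * (1 + m n) := by
            apply mul_le_mul hxn hsqle (Real.sqrt_nonneg _) (by positivity)
    rw [div_le_iff₀ hC0]
    nlinarith
  have hsm : Tendsto (fun n => Real.sqrt (m n)) atTop atTop := by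
    have hsq : Tendsto Real.sqrt atTop atTop := by
      apply tendsto_atTop_atTop.mpr
      intro b
      exact ⟨b^2, fun a ha => le_trans (le_abs_self b)
        (by rw [← Real.sqrt_sq_eq_abs]; exact Real.sqrt_le_sqrt ha)⟩
    exact hsq.comp hmtop
  have hsminv : Tendsto (fun n => (Real.sqrt (m n))⁻¹) atTop (𝓝 0) := hsm.inv_tendsto_atTop
  have hm_ev : ∀ᶠ n in atTop, 0 < m n := hmtop.eventually_gt_atTop 0
  have hu_eq : ∀ᶠ n in atTop, x n * (Real.sqrt (m n))⁻¹ = u n := by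
    filter_upwards [hm_ev] with n hm0
    show ((j n : ℝ) - m n) / Real.sqrt (m n) * (Real.sqrt (m n))⁻¹ = ((j n : ℝ) - m n) / m n
    rw [show ((j n : ℝ) - m n) / Real.sqrt (m n) * (Real.sqrt (m n))⁻¹
        = ((j n : ℝ) - m n) / (Real.sqrt (m n) * Real.sqrt (m n)) from by ring,
      Real.mul_self_sqrt hm0.le]
  have hu0 : Tendsto u atTop (𝓝 0) := by
    apply Tendsto.congr' hu_eq
    simpa using ht'.mul hsminv
  have hjm1 : Tendsto (fun n => (j n : ℝ) / m n) atTop (𝓝 1) := by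
    have h := hu0.const_add 1
    apply Tendsto.congr' _ (by simpa using h)
    filter_upwards [hm_ev] with n hm0
    show 1 + ((j n : ℝ) - m n) / m n = (j n : ℝ) / m n
    field_simp; ring
  have hp0 : Tendsto p atTop (𝓝 0) := by
    have hmj : Tendsto (fun n => m n / (j n : ℝ)) atTop (𝓝 1) := by
      simpa using hjm1.inv₀ one_ne_zero
    apply Tendsto.congr' _ (by simpa using hmj.mul hjn)
    filter_upwards [eventually_ge_atTop 1] with n hn1
    have hj0 : (0:ℝ) < j n := by exact_mod_cast hjpos n
    have hn0 : (0:ℝ) < n := by exact_mod_cast hn1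
    show m n / (j n : ℝ) * ((j n : ℝ) / n) = p n
    rw [hmdef]
    field_simp
  have hq1 : Tendsto (fun n => 1 - p n) atTop (𝓝 1) := by
    simpa using tendsto_const_nhds.sub hp0
  have hr0 : Tendsto (fun n => m n / ((n:ℝ) - m n)) atTop (𝓝 0) := by
    apply Tendsto.congr' _ (by simpa using hp0.div hq1 one_ne_zero)
    filter_upwards [eventually_ge_atTop 1] with n hn1
    have hn0 : (0:ℝ) < n := by exact_mod_cast hn1
    have hq0 : (0:ℝ) < 1 - p n := by linarith [(hp n).2]
    have hnm : (0:ℝ) < (n:ℝ) - m n := by linarith [hm_lt n hn1]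
    show p n / (1 - p n) = m n / ((n:ℝ) - m n)
    rw [hmdef]
    rw [div_eq_div_iff hq0.ne' (by exact hnm.ne')]
    ring
  have hv0 : Tendsto v atTop (𝓝 0) := by
    apply Tendsto.congr' _ (by simpa using hu0.mul hr0)
    filter_upwards [hm_ev] with n hm0
    show u n * (m n / ((n:ℝ) - m n)) = v n
    show ((j n : ℝ) - m n) / m n * (m n / ((n:ℝ) - m n)) = ((j n : ℝ) - m n) / ((n:ℝ) - m n)
    field_simp
  have hjltn : ∀ᶠ n in atTop, j n < n := by
    have h := Metric.tendsto_nhds.mp hjn 1 one_pos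
    filter_upwards [h, eventually_ge_atTop 1] with n hn hn1
    rw [Real.dist_eq, sub_zero] at hn
    have hn0 : (0:ℝ) < n := by exact_mod_cast hn1
    have : (j n : ℝ) / n < 1 := lt_of_abs_lt hn
    have : (j n : ℝ) < n := by rwa [div_lt_one hn0] at this
    exact_mod_cast this
  have h1mj : Tendsto (fun n => 1 - (j n : ℝ) / n) atTop (𝓝 1) := by
    simpa using tendsto_const_nhds.sub hjn
  have hnj_real : Tendsto (fun n : ℕ => (n:ℝ) - j n) atTop atTop := by
    apply Tendsto.congr' _ (h1mj.pos_mul_atTop one_pos (tendsto_natCast_atTop_atTop (R := ℝ)))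
    filter_upwards [eventually_ge_atTop 1] with n hn1
    have hn0 : (0:ℝ) < n := by exact_mod_cast hn1
    show (1 - (j n : ℝ)/n) * n = (n:ℝ) - j n
    field_simp
  have hnjN : Tendsto (fun n => n - j n) atTop atTop := by
    rw [← tendsto_natCast_atTop_iff (R := ℝ)]
    apply Tendsto.congr' _ hnj_real
    filter_upwards [hjltn] with n hn
    rw [Nat.cast_sub hn.le]
  -- Stirling limits
  have hjN : Tendsto j atTop atTop := tendsto_natCast_atTop_iff.mp hj
  have hsj : Tendsto (fun n => stirlingSeq (j n)) atTop (𝓝 (Real.sqrt π)) :=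
    tendsto_stirlingSeq_sqrt_pi.comp hjN
  have hsnj : Tendsto (fun n => stirlingSeq (n - j n)) atTop (𝓝 (Real.sqrt π)) :=
    tendsto_stirlingSeq_sqrt_pi.comp hnjN
  have hsπ : (0:ℝ) < Real.sqrt π := Real.sqrt_pos.mpr hπ
  have hR : Tendsto (fun n => stirlingSeq n / (stirlingSeq (j n) * stirlingSeq (n - j n)))
      atTop (𝓝 (Real.sqrt π / (Real.sqrt π * Real.sqrt π))) :=
    tendsto_stirlingSeq_sqrt_pi.div (hsj.mul hsnj) (by positivity)
  have hS : Tendsto (fun n : ℕ => Real.sqrt ((1 - (j n : ℝ)/n)⁻¹/2)) atTop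
      (𝓝 (Real.sqrt ((1:ℝ)⁻¹/2))) := ((h1mj.inv₀ one_ne_zero).div_const 2).sqrt
  -- the exponent E
  set F : ℝ → ℝ := fun w => (1+w) * Real.log (1+w) - w - w^2/2 with hFdef
  set E : ℕ → ℝ := fun n => (j n : ℝ) * Real.log (m n / (j n : ℝ))
      + ((n:ℝ) - j n) * Real.log (((n:ℝ) - m n) / ((n:ℝ) - j n)) with hEdef
  have hu_half : ∀ᶠ n in atTop, |u n| ≤ 1/2 := by
    have := Metric.tendsto_nhds.mp hu0 (1/2) (by norm_num)
    filter_upwards [this] with n hn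
    rw [Real.dist_eq, sub_zero] at hn
    exact hn.le
  have hv_half : ∀ᶠ n in atTop, |v n| ≤ 1/2 := by
    have := Metric.tendsto_nhds.mp hv0 (1/2) (by norm_num)
    filter_upwards [this] with n hn
    rw [Real.dist_eq, sub_zero] at hn
    exact hn.le
  have hxabs : Tendsto (fun n => 2 * |x n|^3) atTop (𝓝 (2 * |t|^3)) :=
    ((ht'.abs).pow 3).const_mul 2
  have hA : Tendsto (fun n => m n * F (u n)) atTop (𝓝 0) := by
    apply squeeze_zero_norm' (a := fun n => 2 * |x n|^3 * (Real.sqrt (m n))⁻¹)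
    · filter_upwards [hm_ev, hu_half, hu_eq] with n hm0 hun hueq
      have hs0 : (0:ℝ) < Real.sqrt (m n) := Real.sqrt_pos.mpr hm0
      have hFb : |F (u n)| ≤ 2 * |u n|^3 := F_bound hun
      have huabs : |u n| = |x n| / Real.sqrt (m n) := by
        rw [← hueq, abs_mul, abs_inv, abs_of_pos hs0, div_eq_mul_inv]
      have h3 : Real.sqrt (m n)^3 = m n * Real.sqrt (m n) := by
        rw [pow_succ, Real.sq_sqrt hm0.le]
      calc ‖m n * F (u n)‖ = m n * |F (u n)| := by
            rw [norm_mul, Real.norm_eq_abs, Real.norm_eq_abs, abs_of_pos hm0]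
        _ ≤ m n * (2 * |u n|^3) := mul_le_mul_of_nonneg_left hFb hm0.le
        _ = 2 * |x n|^3 * (Real.sqrt (m n))⁻¹ := by
            rw [huabs]
            have calcA : ∀ s X mm : ℝ, s ≠ 0 → mm = s^2 →
                mm * (2 * (X/s)^3) = 2 * X^3 * s⁻¹ := by
              intro s X mm hs hmq
              subst hmq
              field_simp
            exact calcA _ _ _ hs0.ne' (Real.sq_sqrt hm0.le).symm
    · simpa using hxabs.mul hsminv
  have hB : Tendsto (fun n : ℕ => ((n:ℝ) - m n) * F (-(v n))) atTop (𝓝 0) := by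
    apply squeeze_zero_norm'
      (a := fun n => 2 * |x n|^3 * (m n / ((n:ℝ) - m n))^2 * (Real.sqrt (m n))⁻¹)
    · filter_upwards [hm_ev, hv_half, eventually_ge_atTop 1] with n hm0 hvn hn1
      have hnm : (0:ℝ) < (n:ℝ) - m n := by linarith [hm_lt n hn1]
      have hs0 : (0:ℝ) < Real.sqrt (m n) := Real.sqrt_pos.mpr hm0
      have hvn' : |(-(v n))| ≤ 1/2 := by rwa [abs_neg]
      have hFb : |F (-(v n))| ≤ 2 * |v n|^3 := by
        have := F_bound hvn'
        rwa [abs_neg] at this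
      have hjm_abs : |(j n:ℝ) - m n| = |x n| * Real.sqrt (m n) := by
        have hxs : x n * Real.sqrt (m n) = (j n : ℝ) - m n := div_mul_cancel₀ _ hs0.ne'
        rw [← hxs, abs_mul, abs_of_pos hs0]
      have hvabs : |v n| = |x n| * Real.sqrt (m n) / ((n:ℝ) - m n) := by
        show |((j n:ℝ) - m n) / ((n:ℝ) - m n)| = _
        rw [abs_div, hjm_abs, abs_of_pos hnm]
      have h3 : Real.sqrt (m n)^3 = m n * Real.sqrt (m n) := by
        rw [pow_succ, Real.sq_sqrt hm0.le]
      calc ‖((n:ℝ) - m n) * F (-(v n))‖ = ((n:ℝ) - m n) * |F (-(v n))| := by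
            rw [norm_mul, Real.norm_eq_abs, Real.norm_eq_abs, abs_of_pos hnm]
        _ ≤ ((n:ℝ) - m n) * (2 * |v n|^3) := mul_le_mul_of_nonneg_left hFb hnm.le
        _ = 2 * |x n|^3 * (m n / ((n:ℝ) - m n))^2 * (Real.sqrt (m n))⁻¹ := by
            rw [hvabs]
            have calcB : ∀ A s X mm : ℝ, A ≠ 0 → s ≠ 0 → mm = s^2 →
                A * (2 * (X * s / A)^3) = 2 * X^3 * (mm/A)^2 * s⁻¹ := by
              intro A s X mm hA hs hmq
              subst hmq
              field_simp
            exact calcB _ _ _ _ hnm.ne' hs0.ne' (Real.sq_sqrt hm0.le).symm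
    · have h2 : Tendsto (fun n => (m n / ((n:ℝ) - m n))^2) atTop (𝓝 0) := by
        simpa using hr0.pow 2
      simpa using (hxabs.mul h2).mul hsminv
  have hC : Tendsto (fun n => (x n)^2 * (m n / ((n:ℝ) - m n)) / 2) atTop (𝓝 0) := by
    simpa using ((ht'.pow 2).mul hr0).div_const 2
  have hE' : Tendsto (fun n => -(x n)^2/2 - m n * F (u n) - ((n:ℝ) - m n) * F (-(v n))
      - (x n)^2 * (m n / ((n:ℝ) - m n)) / 2) atTop (𝓝 (-t^2/2)) := by
    have h0 : Tendsto (fun n => -(x n)^2/2) atTop (𝓝 (-t^2/2)) := by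
      simpa using ((ht'.pow 2).neg).div_const 2
    simpa using ((h0.sub hA).sub hB).sub hC
  have hE : Tendsto E atTop (𝓝 (-t^2/2)) := by
    apply Tendsto.congr' _ hE'
    filter_upwards [hm_ev, hjltn, eventually_ge_atTop 1] with n hm0 hjn' hn1
    have hj0 : (0:ℝ) < j n := by exact_mod_cast hjpos n
    have hn0 : (0:ℝ) < n := by exact_mod_cast hn1
    have hnj0 : (0:ℝ) < (n:ℝ) - j n := by
      have : (j n:ℝ) < n := by exact_mod_cast hjn'
      linarith
    have hnm : (0:ℝ) < (n:ℝ) - m n := by linarith [hm_lt n hn1]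
    have hx2 : (x n)^2 = ((j n:ℝ) - m n)^2 / m n := by
      show (((j n:ℝ) - m n) / Real.sqrt (m n))^2 = _
      rw [div_pow, Real.sq_sqrt hm0.le]
    have e1 : 1 + u n = (j n:ℝ) / m n := by
      show 1 + ((j n:ℝ) - m n)/m n = _
      field_simp; ring
    have e2 : 1 - v n = ((n:ℝ) - j n) / ((n:ℝ) - m n) := by
      show 1 - ((j n:ℝ) - m n)/((n:ℝ) - m n) = _
      rw [← div_self hnm.ne', div_sub_div_same]
      congr 1
      ring
    have l1 : Real.log (1 + u n) = Real.log (j n) - Real.log (m n) := by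
      rw [e1, Real.log_div hj0.ne' hm0.ne']
    have l2 : Real.log (1 - v n) = Real.log ((n:ℝ) - j n) - Real.log ((n:ℝ) - m n) := by
      rw [e2, Real.log_div hnj0.ne' hnm.ne']
    have l3 : Real.log (m n / (j n:ℝ)) = Real.log (m n) - Real.log (j n) :=
      Real.log_div hm0.ne' hj0.ne'
    have l4 : Real.log (((n:ℝ) - m n)/((n:ℝ) - j n))
        = Real.log ((n:ℝ) - m n) - Real.log ((n:ℝ) - j n) :=
      Real.log_div hnm.ne' hnj0.ne'
    simp only [hEdef, hFdef]
    rw [show (1:ℝ) + -(v n) = 1 - v n from by ring]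
    rw [l1, l2, l3, l4, hx2]
    simp only [hudef, hvdef]
    field_simp
    ring
  -- assemble
  have hexp : Tendsto (fun n => Real.exp (E n)) atTop (𝓝 (Real.exp (-t^2/2))) :=
    (Real.continuous_exp.tendsto _).comp hE
  have hG : Tendsto (fun n : ℕ => stirlingSeq n / (stirlingSeq (j n) * stirlingSeq (n - j n))
      * Real.sqrt ((1 - (j n : ℝ)/n)⁻¹/2) * Real.exp (E n)) atTop
      (𝓝 (Real.sqrt π / (Real.sqrt π * Real.sqrt π) * Real.sqrt ((1:ℝ)⁻¹/2)
        * Real.exp (-t^2/2))) := (hR.mul hS).mul hexp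
  have h2s : Real.sqrt 2 ≠ 0 := by positivity
  have hconst : Real.sqrt π / (Real.sqrt π * Real.sqrt π) * Real.sqrt ((1:ℝ)⁻¹/2)
      = 1 / Real.sqrt (2*π) := by
    rw [Real.sqrt_mul (by norm_num : (0:ℝ) ≤ 2) π]
    rw [show ((1:ℝ)⁻¹/2) = 1/2 by norm_num]
    rw [show Real.sqrt ((1:ℝ)/2) = 1 / Real.sqrt 2 from by
      rw [Real.sqrt_div (by norm_num) 2, Real.sqrt_one]]
    field_simp
  have hG' : Tendsto (fun n : ℕ => stirlingSeq n / (stirlingSeq (j n) * stirlingSeq (n - j n))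
      * Real.sqrt ((1 - (j n : ℝ)/n)⁻¹/2) * Real.exp (E n)) atTop
      (𝓝 ((1 / Real.sqrt (2*π)) * Real.exp (-t^2/2))) := by
    rw [← hconst]
    exact hG
  apply Tendsto.congr' _ hG'
  have spos : ∀ k : ℕ, 1 ≤ k → 0 < stirlingSeq k := by
    intro k hk
    obtain ⟨k', rfl⟩ := Nat.exists_eq_add_of_le hk
    simpa [add_comm] using stirlingSeq'_pos k'
  filter_upwards [hjltn, eventually_ge_atTop 1, hm_ev] with n hjn' hn1 hm0
  have hjle : j n ≤ n := hjn'.le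
  have hnj1 : 1 ≤ n - j n := by omega
  have ha : (0:ℝ) < j n := by exact_mod_cast hjpos n
  have hN : (0:ℝ) < n := by exact_mod_cast hn1
  have hb : (0:ℝ) < ((n - j n : ℕ) : ℝ) := by exact_mod_cast hnj1
  have hcast : ((n - j n : ℕ):ℝ) = (n:ℝ) - j n := by
    exact Nat.cast_sub hjle
  have hp1 := (hp n).1
  have hq0 : (0:ℝ) < 1 - p n := by linarith [(hp n).2]
  have hnm : (0:ℝ) < (n:ℝ) - m n := by linarith [hm_lt n hn1]
  have fact_eq : ∀ k : ℕ, 1 ≤ k → (Nat.factorial k : ℝ)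
      = stirlingSeq k * (Real.sqrt (2*k) * ((k:ℝ)/Real.exp 1)^k) := by
    intro k hk
    have hk0 : (0:ℝ) < k := by exact_mod_cast hk
    have hd : (0:ℝ) < Real.sqrt (2*k) * ((k:ℝ)/Real.exp 1)^k := by positivity
    rw [stirlingSeq, div_mul_cancel₀ _ hd.ne']
  have hmj : (0:ℝ) < m n / (j n:ℝ) := by positivity
  have hnmj : (0:ℝ) < ((n:ℝ) - m n)/((n - j n : ℕ):ℝ) := div_pos hnm hb
  have hexpE : Real.exp (E n) = (m n/(j n:ℝ))^(j n)
      * (((n:ℝ) - m n)/((n - j n : ℕ):ℝ))^(n - j n) := by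
    show Real.exp ((j n:ℝ) * Real.log (m n/(j n:ℝ))
      + ((n:ℝ) - (j n:ℝ)) * Real.log (((n:ℝ) - m n)/((n:ℝ) - (j n:ℝ)))) = _
    rw [← hcast]
    rw [Real.exp_add, Real.exp_nat_mul, Real.exp_nat_mul, Real.exp_log hmj,
      Real.exp_log hnmj]
  have hsqrt : Real.sqrt ((1 - (j n:ℝ)/n)⁻¹/2)
      = Real.sqrt (j n) * Real.sqrt (2*(n:ℝ))
        / (Real.sqrt (2*((j n:ℝ))) * Real.sqrt (2*((n - j n : ℕ):ℝ))) := by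
    rw [← Real.sqrt_mul (by positivity : (0:ℝ) ≤ (j n:ℝ)) (2*(n:ℝ))]
    rw [← Real.sqrt_mul (by positivity : (0:ℝ) ≤ 2*((j n:ℝ))) (2*((n - j n : ℕ):ℝ))]
    rw [← Real.sqrt_div (by positivity)]
    congr 1
    rw [hcast]
    have h1 : 1 - (j n:ℝ)/n = ((n:ℝ) - j n)/n := by
      rw [← div_self hN.ne', div_sub_div_same]
    rw [h1]
    have hnj0 : (0:ℝ) < (n:ℝ) - j n := by rw [← hcast]; exact hb
    field_simp
  have hpow : ((n:ℝ)/Real.exp 1)^n * (p n)^(j n) * (1 - p n)^(n - j n)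
      = ((j n:ℝ)/Real.exp 1)^(j n) * (((n - j n:ℕ):ℝ)/Real.exp 1)^(n - j n)
        * ((m n/(j n:ℝ))^(j n) * (((n:ℝ) - m n)/((n - j n:ℕ):ℝ))^(n - j n)) := by
    have key : ((n:ℝ)/Real.exp 1)^n
        = ((n:ℝ)/Real.exp 1)^(j n) * ((n:ℝ)/Real.exp 1)^(n - j n) := by
      rw [← pow_add, Nat.add_sub_cancel' hjle]
    have h1 : ((j n:ℝ)/Real.exp 1) * (m n/(j n:ℝ)) = (n:ℝ)/Real.exp 1 * p n := by
      show ((j n:ℝ)/Real.exp 1) * (((n:ℝ) * p n)/(j n:ℝ)) = (n:ℝ)/Real.exp 1 * p n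
      field_simp [ha.ne']
    have h2 : (((n - j n:ℕ):ℝ)/Real.exp 1) * (((n:ℝ) - m n)/((n - j n:ℕ):ℝ))
        = (n:ℝ)/Real.exp 1 * (1 - p n) := by
      show (((n - j n:ℕ):ℝ)/Real.exp 1) * (((n:ℝ) - (n:ℝ) * p n)/((n - j n:ℕ):ℝ))
        = (n:ℝ)/Real.exp 1 * (1 - p n)
      rw [div_mul_div_comm, div_mul_eq_mul_div, div_eq_div_iff (by positivity) (by positivity)]
      ring
    calc ((n:ℝ)/Real.exp 1)^n * (p n)^(j n) * (1 - p n)^(n - j n)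
        = ((n:ℝ)/Real.exp 1 * p n)^(j n) * ((n:ℝ)/Real.exp 1 * (1 - p n))^(n - j n) := by
          rw [key, mul_pow, mul_pow]
          ring
      _ = _ := by
          rw [← h1, ← h2, mul_pow, mul_pow]
          ring
  show stirlingSeq n / (stirlingSeq (j n) * stirlingSeq (n - j n))
      * Real.sqrt ((1 - (j n : ℝ)/n)⁻¹/2) * Real.exp (E n)
    = Real.sqrt (j n) * binomProb n (p n) (j n)
  rw [binomProb, Nat.cast_choose ℝ hjle, hexpE, hsqrt]
  rw [fact_eq n hn1, fact_eq (j n) (hjpos n), fact_eq (n - j n) hnj1]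
  have final : ∀ sN sJ sB r2N r2J r2B rj PN PJ PB Qall pj qb : ℝ,
      sJ ≠ 0 → sB ≠ 0 → r2J ≠ 0 → r2B ≠ 0 → PJ ≠ 0 → PB ≠ 0 →
      PN * pj * qb = PJ * PB * Qall →
      sN/(sJ*sB) * (rj * r2N/(r2J*r2B)) * Qall
        = rj * (sN * (r2N * PN) / (sJ * (r2J * PJ) * (sB * (r2B * PB))) * pj * qb) := by
    intro sN sJ sB r2N r2J r2B rj PN PJ PB Qall pj qb h1 h2 h3 h4 h5 h6 hkey
    have step : rj * (sN * (r2N * PN) / (sJ * (r2J * PJ) * (sB * (r2B * PB))) * pj * qb)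
        = rj * sN * r2N * (PN * pj * qb) / (sJ * (r2J * PJ) * (sB * (r2B * PB))) := by
      ring
    rw [step, hkey]
    field_simp
  exact final (stirlingSeq n) (stirlingSeq (j n)) (stirlingSeq (n - j n))
    (Real.sqrt (2*(n:ℝ))) (Real.sqrt (2*((j n:ℝ)))) (Real.sqrt (2*((n - j n:ℕ):ℝ)))
    (Real.sqrt (j n)) (((n:ℝ)/Real.exp 1)^n) (((j n:ℝ)/Real.exp 1)^(j n))
    (((((n - j n:ℕ):ℝ))/Real.exp 1)^(n - j n))
    ((m n/(j n:ℝ))^(j n) * (((n:ℝ) - m n)/((n - j n:ℕ):ℝ))^(n - j n))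
    ((p n)^(j n)) ((1 - p n)^(n - j n))
    (spos (j n) (hjpos n)).ne' (spos (n - j n) hnj1).ne'
    (by positivity) (by positivity) (by positivity) (by positivity) hpow
end

section
/- If f is the standard bivariate normal density f(x₁,x₂) = (1/(2π)) e^{−(x₁²+x₂²)/2}, then for every k ≥ 0, p(k) = ((α/2)t)^k/k! · ∫_{ℝ²} e^{−(α/2) t f(x)} f(x)^{k+1} dx = (4π/(αt)) − e^{−αt/(4π)} · Σ_{i=0}^{k} (αt/(4π))^{i−1}/i!. -/
open Real MeasureTheory

lemma J_closed (c : ℝ) (hc : 0 < c) : ∀ k : ℕ,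
    c ^ k / (Nat.factorial k : ℝ) * ∫ u in (0:ℝ)..1, Real.exp (-(c * u)) * u ^ k
      = 1 / c - Real.exp (-c) *
          ∑ i ∈ Finset.range (k + 1), c ^ ((i : ℤ) - 1) / (Nat.factorial i : ℝ) := by
  have hexp : ∀ x : ℝ, HasDerivAt (fun y : ℝ => -(1/c) * Real.exp (-(c * y)))
      (Real.exp (-(c * x))) x := by
    intro x
    have h1 : HasDerivAt (fun y : ℝ => -(c * y)) (-c) x := by
      exact (((hasDerivAt_id x).const_mul c).neg).congr_deriv (by simp)
    have := (h1.exp).const_mul (-(1/c))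
    refine this.congr_deriv ?_
    field_simp
  have hbase : ∫ u in (0:ℝ)..1, Real.exp (-(c * u)) = (1 - Real.exp (-c)) / c := by
    rw [intervalIntegral.integral_eq_sub_of_hasDerivAt (fun x _ => hexp x)
      ((Real.continuous_exp.comp (by continuity)).intervalIntegrable 0 1)]
    field_simp
    ring
    simp only [Real.exp_zero]; ring
  intro k
  induction k with
  | zero =>
    simp only [pow_zero, Nat.factorial_zero, Nat.cast_one, div_one, one_mul,
      Finset.range_one, Finset.sum_singleton, Nat.cast_zero, zero_sub,
      zpow_neg, zpow_one]
    simp only [pow_zero, mul_one] at *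
    rw [hbase]
    field_simp
    simp
    field_simp
  | succ k ih =>
    have hparts : ∫ u in (0:ℝ)..1, Real.exp (-(c * u)) * u ^ (k+1)
        = -(1/c) * Real.exp (-c)
          + ((k:ℝ)+1) / c * ∫ u in (0:ℝ)..1, Real.exp (-(c * u)) * u ^ k := by
      have h := intervalIntegral.integral_mul_deriv_eq_deriv_mul
        (u := fun x : ℝ => x ^ (k+1)) (u' := fun x : ℝ => ((k:ℝ)+1) * x ^ k)
        (v := fun x : ℝ => -(1/c) * Real.exp (-(c * x)))
        (v' := fun x : ℝ => Real.exp (-(c * x)))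
        (fun x _ => by simpa using hasDerivAt_pow (k+1) x)
        (fun x _ => hexp x)
        ((by continuity : Continuous fun x : ℝ => ((k:ℝ)+1) * x ^ k).intervalIntegrable 0 1)
        ((Real.continuous_exp.comp (by continuity)).intervalIntegrable 0 1)
      have h2 : ∀ u : ℝ, Real.exp (-(c * u)) * u ^ (k+1) = u ^ (k+1) * Real.exp (-(c*u)) := by
        intro u; ring
      simp only [h2]
      rw [h]
      beta_reduce
      have h3 : ∀ u : ℝ, ((k:ℝ)+1) * u ^ k * (-(1/c) * Real.exp (-(c * u)))
          = (-( ((k:ℝ)+1) / c)) * (Real.exp (-(c*u)) * u ^ k) := by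
        intro u; field_simp
      simp only [h3]
      rw [intervalIntegral.integral_const_mul]
      simp
    rw [hparts]
    have hfac : (Nat.factorial (k+1) : ℝ) = ((k:ℝ)+1) * (Nat.factorial k : ℝ) := by
      push_cast [Nat.factorial_succ]; ring
    rw [Finset.sum_range_succ]
    have hck : (c:ℝ) ^ (((k+1:ℕ) : ℤ) - 1) = c ^ k := by
      push_cast
      rw [add_sub_cancel_right]
      exact zpow_natCast c k
    rw [hck, hfac]
    have hfk : (Nat.factorial k : ℝ) ≠ 0 := Nat.cast_ne_zero.2 (Nat.factorial_ne_zero k)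
    have h1 : c ^ (k+1) / (((k:ℝ)+1) * (Nat.factorial k : ℝ))
        * (-(1/c) * Real.exp (-c) + ((k:ℝ)+1)/c * ∫ u in (0:ℝ)..1, Real.exp (-(c * u)) * u ^ k)
        = - (Real.exp (-c) * (c ^ k / (((k:ℝ)+1) * (Nat.factorial k : ℝ))))
          + c ^ k / (Nat.factorial k : ℝ) * ∫ u in (0:ℝ)..1, Real.exp (-(c * u)) * u ^ k := by
      have hk1 : ((k:ℝ)+1) ≠ 0 := by positivity
      field_simp
      ring
    rw [h1, ih]
    ring

lemma image_exp_neg_sq : (fun y : ℝ => Real.exp (-y^2/2)) '' Set.Ioi 0 = Set.Ioo (0:ℝ) 1 := by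
  ext u
  constructor
  · rintro ⟨y, hy, rfl⟩
    refine ⟨Real.exp_pos _, ?_⟩
    rw [← Real.exp_zero]
    apply Real.exp_lt_exp.2
    have : (0:ℝ) < y := hy
    nlinarith
  · rintro ⟨h0, h1⟩
    refine ⟨Real.sqrt (-2 * Real.log u), ?_, ?_⟩
    · have hlog : Real.log u < 0 := Real.log_neg h0 h1
      exact Real.sqrt_pos.2 (by linarith)
    · have hlog : Real.log u < 0 := Real.log_neg h0 h1
      beta_reduce
      rw [Real.sq_sqrt (by linarith)]
      rw [show -(-2 * Real.log u) / 2 = Real.log u by ring]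
      exact Real.exp_log h0

lemma deriv_phi (y : ℝ) : HasDerivAt (fun y : ℝ => Real.exp (-y^2/2))
    (-y * Real.exp (-y^2/2)) y := by
  have h1 : HasDerivAt (fun y : ℝ => -y^2/2) (-y) y := by
    have := ((hasDerivAt_pow 2 y).neg).div_const 2
    refine this.congr_deriv ?_
    norm_num
    ring
  simpa [mul_comm] using h1.exp

lemma substitution (c : ℝ) (k : ℕ) :
    ∫ y in Set.Ioi (0:ℝ),
        y * (Real.exp (-(c * Real.exp (-y^2/2))) * Real.exp (-y^2/2) ^ (k+1))
      = ∫ u in Set.Ioo (0:ℝ) 1, Real.exp (-(c * u)) * u ^ k := by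
  have hanti : StrictAntiOn (fun y : ℝ => Real.exp (-y^2/2)) (Set.Ioi 0) := by
    intro a ha b hb hab
    apply Real.exp_lt_exp.2
    have ha' : (0:ℝ) < a := ha
    nlinarith
  have h := integral_image_eq_integral_abs_deriv_smul measurableSet_Ioi
    (f := fun y : ℝ => Real.exp (-y^2/2)) (f' := fun y : ℝ => -y * Real.exp (-y^2/2))
    (fun x _ => (deriv_phi x).hasDerivWithinAt) hanti.injOn
    (fun u => Real.exp (-(c * u)) * u ^ k)
  rw [image_exp_neg_sq] at h
  rw [h]
  apply setIntegral_congr_fun measurableSet_Ioi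
  intro y hy
  have hy' : (0:ℝ) < y := hy
  have habs : |(-y * Real.exp (-y^2/2))| = y * Real.exp (-y^2/2) := by
    rw [abs_of_nonpos (by nlinarith [Real.exp_pos (-y^2/2)])]
    ring
  beta_reduce
  rw [smul_eq_mul, habs, pow_succ]
  ring

lemma radial (c : ℝ) (k : ℕ) :
    (∫ x : ℂ, Real.exp (-(c * Real.exp (-‖x‖^2/2))) * Real.exp (-‖x‖^2/2) ^ (k+1))
      = (2 * π) * ∫ y in Set.Ioi (0:ℝ),
          y * (Real.exp (-(c * Real.exp (-y^2/2))) * Real.exp (-y^2/2) ^ (k+1)) := by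
  have h := MeasureTheory.integral_fun_norm_addHaar (volume : Measure ℂ)
    (fun r : ℝ => Real.exp (-(c * Real.exp (-r^2/2))) * Real.exp (-r^2/2) ^ (k+1))
  rw [h]
  simp only [Complex.finrank_real_complex, Complex.volume_ball, smul_eq_mul, nsmul_eq_mul,
    pow_one]
  rw [show volume.real (Metric.ball (0:ℂ) 1) = π by simp [Measure.real, Complex.volume_ball]]
  norm_num
  ring

/-- If `f` is the standard bivariate normal density (the plane being
modeled as `ℂ`), then the degree distribution satisfies
`p(k) = 4π/(αt) - e^{-αt/(4π)} Σ_{i=0}^k (αt/(4π))^{i-1}/i!`. -/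
theorem degree_distribution_gaussian (α t : ℝ) (hα : α ∈ Set.Ioc 0 (2 * π)) (ht : 0 < t)
    (f : ℂ → ℝ)
    (hf : ∀ x : ℂ, f x = (1 / (2 * π)) * Real.exp (-(x.re ^ 2 + x.im ^ 2) / 2))
    (k : ℕ) :
    ((α / 2 * t) ^ k / (Nat.factorial k : ℝ)) *
        ∫ x : ℂ, Real.exp (-(α / 2 * t * f x)) * f x ^ (k + 1) =
      4 * π / (α * t) -
        Real.exp (-(α * t) / (4 * π)) *
          ∑ i ∈ Finset.range (k + 1),
            (α * t / (4 * π)) ^ ((i : ℤ) - 1) / (Nat.factorial i : ℝ) := by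
  have hπ : (0:ℝ) < π := Real.pi_pos
  have hα0 : 0 < α := hα.1
  set c : ℝ := α * t / (4 * π) with hcdef
  have hc : 0 < c := by positivity
  have hnorm : ∀ x : ℂ, x.re ^ 2 + x.im ^ 2 = ‖x‖ ^ 2 := by
    intro x
    rw [Complex.sq_norm, Complex.normSq_apply]
    ring
  have key : ∀ x : ℂ, Real.exp (-(α / 2 * t * f x)) * f x ^ (k + 1)
      = (1/(2*π))^(k+1) *
        (Real.exp (-(c * Real.exp (-‖x‖^2/2))) * Real.exp (-‖x‖^2/2) ^ (k+1)) := by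
    intro x
    rw [hf x, hnorm x]
    rw [show α / 2 * t * (1 / (2 * π) * Real.exp (-‖x‖ ^ 2 / 2))
        = c * Real.exp (-‖x‖^2/2) by rw [hcdef]; field_simp; ring]
    rw [mul_pow]
    ring
  simp only [key]
  rw [MeasureTheory.integral_const_mul, radial c k, substitution c k,
    ← MeasureTheory.integral_Ioc_eq_integral_Ioo,
    ← intervalIntegral.integral_of_le (zero_le_one)]
  have hJ := J_closed c hc k
  have hconst : (α / 2 * t) ^ k / (Nat.factorial k : ℝ) *
      ((1/(2*π))^(k+1) * ((2*π) * ∫ u in (0:ℝ)..1, Real.exp (-(c * u)) * u ^ k))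
      = c ^ k / (Nat.factorial k : ℝ) * ∫ u in (0:ℝ)..1, Real.exp (-(c * u)) * u ^ k := by
    have hc1 : (α / 2 * t) * (1/(2*π)) = c := by rw [hcdef]; field_simp; ring
    have : (α / 2 * t) ^ k * ((1/(2*π))^(k+1) * (2*π))
        = c ^ k := by
      rw [pow_succ]
      have h2 : (1:ℝ)/(2*π) * (2*π) = 1 := by field_simp
      have hgen : ∀ a b d : ℝ, a ^ k * (b ^ k * b * d) = (a * b) ^ k * (b * d) := by
        intro a b d; rw [mul_pow]; ring
      rw [hgen, hc1, h2, mul_one]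
    calc (α / 2 * t) ^ k / (Nat.factorial k : ℝ) *
        ((1/(2*π))^(k+1) * ((2*π) * ∫ u in (0:ℝ)..1, Real.exp (-(c * u)) * u ^ k))
        = ((α / 2 * t) ^ k * ((1/(2*π))^(k+1) * (2*π))) / (Nat.factorial k : ℝ)
          * ∫ u in (0:ℝ)..1, Real.exp (-(c * u)) * u ^ k := by ring
      _ = _ := by rw [this]
  rw [hconst, hJ]
  have h4 : 4 * π / (α * t) = 1 / c := by
    rw [hcdef, one_div_div]
  have h5 : -(α * t) / (4 * π) = -c := by
    rw [hcdef, neg_div]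
  rw [h4, h5]
end

section
/- With f the standard bivariate normal density and p(k) as in the previous statement, p(0) = (4π/(αt))(1 − e^{−αt/(4π)}), and consequently p(0) → 1 as t → 0⁺ and p(0) → 0 as t → ∞. -/
open Real MeasureTheory Filter Set

lemma radial_aux (c : ℝ) (hc : 0 < c) :
    ∫ r in Set.Ioi (0:ℝ),
      r * (Real.exp (-(c * Real.exp (-r ^ 2 / 2))) * Real.exp (-r ^ 2 / 2))
      = (1 - Real.exp (-c)) / c := by
  have key : ∀ r : ℝ, HasDerivAt (fun r : ℝ => c⁻¹ * Real.exp (-(c * Real.exp (-r ^ 2 / 2))))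
      (r * (Real.exp (-(c * Real.exp (-r ^ 2 / 2))) * Real.exp (-r ^ 2 / 2))) r := by
    intro r
    have h1 : HasDerivAt (fun r : ℝ => -r ^ 2 / 2) (-r) r := by
      have := ((hasDerivAt_pow 2 r).neg).div_const 2
      simpa using this.congr_deriv (by ring)
    have h4 := (((h1.exp.const_mul c).neg).exp).const_mul c⁻¹
    refine h4.congr_deriv ?_
    simp only [Pi.neg_apply]
    field_simp
  have hlim : Tendsto (fun r : ℝ => c⁻¹ * Real.exp (-(c * Real.exp (-r ^ 2 / 2)))) atTop
      (nhds c⁻¹) := by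
    have h0 : Tendsto (fun r : ℝ => Real.exp (-r ^ 2 / 2)) atTop (nhds 0) := by
      apply Real.tendsto_exp_atBot.comp
      apply Filter.Tendsto.atBot_div_const (by norm_num : (0:ℝ) < 2)
      rw [tendsto_neg_atBot_iff]
      exact tendsto_pow_atTop two_ne_zero
    have hcont : Tendsto (fun y : ℝ => c⁻¹ * Real.exp (-(c * y))) (nhds 0) (nhds c⁻¹) := by
      have : Continuous (fun y : ℝ => c⁻¹ * Real.exp (-(c * y))) := by continuity
      simpa using this.tendsto 0
    exact hcont.comp h0
  rw [integral_Ioi_of_hasDerivAt_of_nonneg' (fun x _ => key x)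
    (fun x hx => by have hx0 := le_of_lt (Set.mem_Ioi.mp hx); positivity) hlim]
  simp only [neg_zero, ne_eq, OfNat.ofNat_ne_zero, not_false_eq_true, zero_pow, zero_div,
    Real.exp_zero, mul_one]
  field_simp

lemma cint_aux (c : ℝ) (hc : 0 < c) :
    ∫ x : ℂ, Real.exp (-(c * Real.exp (-(x.re ^ 2 + x.im ^ 2) / 2))) *
        Real.exp (-(x.re ^ 2 + x.im ^ 2) / 2)
      = 2 * π * ((1 - Real.exp (-c)) / c) := by
  have hsq : ∀ p : ℝ × ℝ,
      (Complex.polarCoord.symm p).re ^ 2 + (Complex.polarCoord.symm p).im ^ 2 = p.1 ^ 2 := by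
    intro p
    have h := Real.sin_sq_add_cos_sq p.2
    simp only [Complex.polarCoord_symm_apply]
    simp [Complex.add_re, Complex.add_im, Complex.mul_re, Complex.mul_im, Complex.cos_ofReal_re, Complex.sin_ofReal_re, Complex.cos_ofReal_im, Complex.sin_ofReal_im]
    nlinarith [h]
  rw [← Complex.integral_comp_polarCoord_symm, show polarCoord.target = Set.Ioi (0:ℝ) ×ˢ Set.Ioo (-π) π from rfl]
  calc (∫ p in Set.Ioi (0:ℝ) ×ˢ Set.Ioo (-π) π, p.1 •
        (Real.exp (-(c * Real.exp (-((Complex.polarCoord.symm p).re ^ 2 +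
            (Complex.polarCoord.symm p).im ^ 2) / 2))) *
          Real.exp (-((Complex.polarCoord.symm p).re ^ 2 +
            (Complex.polarCoord.symm p).im ^ 2) / 2)))
      = ∫ p in Set.Ioi (0:ℝ) ×ˢ Set.Ioo (-π) π,
          (p.1 * (Real.exp (-(c * Real.exp (-p.1 ^ 2 / 2))) * Real.exp (-p.1 ^ 2 / 2)))
            * (1 : ℝ) := by
        apply setIntegral_congr_fun (measurableSet_Ioi.prod measurableSet_Ioo)
        intro p _
        simp only [hsq, smul_eq_mul, mul_one]
    _ = (∫ r in Set.Ioi (0:ℝ),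
          r * (Real.exp (-(c * Real.exp (-r ^ 2 / 2))) * Real.exp (-r ^ 2 / 2))) *
        ∫ _ in Set.Ioo (-π) π, (1:ℝ) := by
        rw [Measure.volume_eq_prod]
        exact setIntegral_prod_mul
          (fun r : ℝ => r * (Real.exp (-(c * Real.exp (-r ^ 2 / 2))) * Real.exp (-r ^ 2 / 2)))
          (fun _ : ℝ => (1:ℝ)) _ _
    _ = 2 * π * ((1 - Real.exp (-c)) / c) := by
        have hpos : (0:ℝ) ≤ π + π := by positivity
        rw [radial_aux c hc]
        simp only [integral_const, Measure.restrict_apply', measurableSet_Ioo, univ_inter,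
          volume_Ioo, sub_neg_eq_add, ENNReal.toReal_ofReal hpos, smul_eq_mul, mul_one]
        rw [measureReal_restrict_apply_univ, Real.volume_real_Ioo, max_eq_left (by linarith)]
        ring

/-- With `f` the standard bivariate normal density,
`p(0) = (4π/(αt))(1 - e^{-αt/(4π)})`, and consequently `p(0) → 1` as `t → 0⁺` and
`p(0) → 0` as `t → ∞`. -/
theorem degree_distribution_gaussian_zero (α : ℝ) (hα : α ∈ Set.Ioc 0 (2 * π))
    (f : ℂ → ℝ)
    (hf : ∀ x : ℂ, f x = (1 / (2 * π)) * Real.exp (-(x.re ^ 2 + x.im ^ 2) / 2)) :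
    (∀ t : ℝ, 0 < t →
        ∫ x : ℂ, Real.exp (-(α / 2 * t * f x)) * f x =
          (4 * π / (α * t)) * (1 - Real.exp (-(α * t) / (4 * π)))) ∧
    Tendsto (fun t : ℝ => ∫ x : ℂ, Real.exp (-(α / 2 * t * f x)) * f x)
      (nhdsWithin 0 (Set.Ioi 0)) (nhds 1) ∧
    Tendsto (fun t : ℝ => ∫ x : ℂ, Real.exp (-(α / 2 * t * f x)) * f x)
      atTop (nhds 0) := by
  have hπ : (0:ℝ) < π := Real.pi_pos
  have hα0 : 0 < α := hα.1
  have hmain : ∀ t : ℝ, 0 < t →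
      ∫ x : ℂ, Real.exp (-(α / 2 * t * f x)) * f x =
        (4 * π / (α * t)) * (1 - Real.exp (-(α * t) / (4 * π))) := by
    intro t ht
    set c := α * t / (4 * π) with hcdef
    have hc : 0 < c := by positivity
    have h1 : ∀ x : ℂ, Real.exp (-(α / 2 * t * f x)) * f x =
        (1 / (2 * π)) * (Real.exp (-(c * Real.exp (-(x.re ^ 2 + x.im ^ 2) / 2))) *
          Real.exp (-(x.re ^ 2 + x.im ^ 2) / 2)) := by
      intro x
      rw [hf x]
      have harg : α / 2 * t * ((1 / (2 * π)) * Real.exp (-(x.re ^ 2 + x.im ^ 2) / 2)) =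
          c * Real.exp (-(x.re ^ 2 + x.im ^ 2) / 2) := by
        rw [hcdef]; field_simp; ring
      rw [harg]; ring
    simp only [h1]
    rw [integral_const_mul, cint_aux c hc]
    have hE : Real.exp (-c) = Real.exp (-(α * t) / (4 * π)) := by rw [hcdef, neg_div]
    rw [hE, hcdef]
    field_simp
  refine ⟨hmain, ?_, ?_⟩
  · have hslope : Tendsto (fun y : ℝ => (Real.exp y - 1) / y) (nhdsWithin 0 {(0:ℝ)}ᶜ)
        (nhds 1) := by
      have h := Real.hasDerivAt_exp 0
      rw [hasDerivAt_iff_tendsto_slope] at h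
      simpa [slope_fun_def_field, Real.exp_zero] using h
    have hs : Tendsto (fun t : ℝ => -(α * t) / (4 * π)) (nhdsWithin 0 (Set.Ioi 0))
        (nhdsWithin 0 {(0:ℝ)}ᶜ) := by
      rw [tendsto_nhdsWithin_iff]
      constructor
      · have hco : Continuous fun t : ℝ => -(α * t) / (4 * π) := by continuity
        have h := hco.tendsto 0
        simp only [mul_zero, neg_zero, zero_div] at h
        exact h.mono_left nhdsWithin_le_nhds
      · filter_upwards [self_mem_nhdsWithin] with t ht
        have h0 : 0 < α * t := mul_pos hα0 ht
        simp only [Set.mem_compl_iff, Set.mem_singleton_iff]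
        exact div_ne_zero (neg_ne_zero.mpr (ne_of_gt h0)) (by positivity)
    have hcomp := hslope.comp hs
    apply hcomp.congr'
    filter_upwards [self_mem_nhdsWithin] with t ht
    have h0 : α ≠ 0 := ne_of_gt hα0
    have h0' : t ≠ 0 := ne_of_gt ht
    rw [hmain t ht]
    show (Real.exp (-(α * t) / (4 * π)) - 1) / (-(α * t) / (4 * π)) = _
    field_simp
    ring
  · have h1 : Tendsto (fun t : ℝ => α * t) atTop atTop :=
      Filter.Tendsto.const_mul_atTop hα0 tendsto_id
    have h2 : Tendsto (fun t : ℝ => 4 * π / (α * t)) atTop (nhds 0) :=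
      Tendsto.div_atTop tendsto_const_nhds h1
    have h3 : Tendsto (fun t : ℝ => Real.exp (-(α * t) / (4 * π))) atTop (nhds 0) := by
      apply Real.tendsto_exp_atBot.comp
      apply Filter.Tendsto.atBot_div_const (by positivity : (0:ℝ) < 4 * π)
      rw [tendsto_neg_atBot_iff]
      exact h1
    have h4 : Tendsto (fun t : ℝ => 1 - Real.exp (-(α * t) / (4 * π))) atTop (nhds (1 - 0)) :=
      tendsto_const_nhds.sub h3
    have h5 := h2.mul h4
    rw [zero_mul] at h5
    apply h5.congr'
    filter_upwards [eventually_gt_atTop (0:ℝ)] with t ht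
    exact (hmain t ht).symm
end

section
/- Under the same setup as the previous statement but with for in-degree: let q_n(x,t) = (α/(2π)) F(B(x, r_n(t))). Then n^{−1} E[ξ_n^{in}(t,A)] = ∫_A P[Bin(n−1, q_n(x,t)) ≥ k] f(x) dx → ∫_A P[Poi((α/2) t f(x)) ≥ k] f(x) dx as n → ∞. -/
open Real MeasureTheory Filter
open Topology

/-- `P[Bin(m,p) ≥ k]`, the upper tail of a binomial distribution. -/
noncomputable def binomTail (m : ℕ) (p : ℝ) (k : ℕ) : ℝ :=
  ∑ j ∈ Finset.Icc k m, (m.choose j : ℝ) * p ^ j * (1 - p) ^ (m - j)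

/-- `P[Poi(l) ≥ k]`, the upper tail of a Poisson distribution with mean `l`. -/
noncomputable def poiTail (l : ℝ) (k : ℕ) : ℝ :=
  1 - ∑ j ∈ Finset.range k, Real.exp (-l) * l ^ j / (Nat.factorial j : ℝ)

lemma binom_sum_one (m : ℕ) (p : ℝ) :
    ∑ j ∈ Finset.range (m + 1), (m.choose j : ℝ) * p ^ j * (1 - p) ^ (m - j) = 1 := by
  have h := add_pow p (1 - p) m
  have h2 : ∑ j ∈ Finset.range (m + 1), (m.choose j : ℝ) * p ^ j * (1 - p) ^ (m - j)
      = ∑ j ∈ Finset.range (m + 1), p ^ j * (1 - p) ^ (m - j) * (m.choose j : ℝ) :=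
    Finset.sum_congr rfl fun j _ => by ring
  rw [h2, ← h]
  simp

lemma Icc_eq_sdiff (k m : ℕ) : Finset.Icc k m = Finset.range (m + 1) \ Finset.range k := by
  ext a; simp [Nat.lt_succ_iff]; omega

lemma binomTail_eq (m k : ℕ) (p : ℝ) (h : k ≤ m) :
    binomTail m p k = 1 - ∑ j ∈ Finset.range k, (m.choose j : ℝ) * p ^ j * (1 - p) ^ (m - j) := by
  rw [binomTail, Icc_eq_sdiff,
    Finset.sum_sdiff_eq_sub (Finset.range_subset_range.2 (by omega)), binom_sum_one]

lemma binomTail_nonneg (m : ℕ) {p : ℝ} (h0 : 0 ≤ p) (h1 : p ≤ 1) (k : ℕ) :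
    0 ≤ binomTail m p k :=
  Finset.sum_nonneg fun j _ =>
    mul_nonneg (mul_nonneg (Nat.cast_nonneg _) (pow_nonneg h0 _)) (pow_nonneg (by linarith) _)

lemma binomTail_le_one (m : ℕ) {p : ℝ} (h0 : 0 ≤ p) (h1 : p ≤ 1) (k : ℕ) :
    binomTail m p k ≤ 1 := by
  rw [← binom_sum_one m p]
  apply Finset.sum_le_sum_of_subset_of_nonneg
  · intro a ha; simp at ha ⊢; omega
  · intro j _ _
    exact mul_nonneg (mul_nonneg (Nat.cast_nonneg _) (pow_nonneg h0 _))
      (pow_nonneg (by linarith) _)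

lemma binomTail_tendsto_poiTail (lam : ℝ) (k : ℕ)
    (m : ℕ → ℕ) (hm : Tendsto m atTop atTop)
    (p : ℕ → ℝ) (hp0 : ∀ n, 0 ≤ p n)
    (hmp : Tendsto (fun n => (m n : ℝ) * p n) atTop (𝓝 lam)) :
    Tendsto (fun n => binomTail (m n) (p n) k) atTop (𝓝 (poiTail lam k)) := by
  have hmR : Tendsto (fun n => (m n : ℝ)) atTop atTop :=
    tendsto_natCast_atTop_atTop.comp hm
  have hminv : Tendsto (fun n => ((m n : ℝ))⁻¹) atTop (𝓝 0) :=
    tendsto_inv_atTop_zero.comp hmR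
  have hp_to : Tendsto p atTop (𝓝 0) := by
    have h := hmp.mul hminv
    rw [mul_zero] at h
    apply h.congr'
    filter_upwards [hm.eventually_ge_atTop 1] with n hn
    field_simp
  -- each pmf term tends to the Poisson pmf
  have hterm : ∀ j : ℕ, Tendsto
      (fun n => ((m n).choose j : ℝ) * p n ^ j * (1 - p n) ^ (m n - j)) atTop
      (𝓝 (Real.exp (-lam) * lam ^ j / (Nat.factorial j : ℝ))) := by
    intro j
    have hplt : ∀ᶠ n in atTop, p n < 1/2 := hp_to.eventually (gt_mem_nhds (by norm_num))
    have hmj : ∀ᶠ n in atTop, j ≤ m n := hm.eventually_ge_atTop j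
    -- the falling-factorial part
    have hprod : Tendsto (fun n => ∏ i ∈ Finset.range j, (((m n : ℝ) - i) * p n)) atTop
        (𝓝 (lam ^ j)) := by
      have := tendsto_finset_prod (Finset.range j)
        (fun i _ => show Tendsto (fun n => ((m n : ℝ) - i) * p n) atTop (𝓝 lam) by
          have h0 : Tendsto (fun n => (i : ℝ) * p n) atTop (𝓝 0) := by
            simpa using hp_to.const_mul (i : ℝ)
          have h1 : Tendsto (fun n => (m n : ℝ) * p n - (i : ℝ) * p n) atTop (𝓝 (lam - 0)) :=
            hmp.sub h0
          rw [sub_zero] at h1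
          exact h1.congr fun n => by ring)
      simpa using this
    -- the exponential part
    have herr : Tendsto (fun n => ((m n : ℝ) - j) * (Real.log (1 - p n) + p n)) atTop
        (𝓝 0) := by
      have h2lim : Tendsto (fun n => 2 * ((m n : ℝ) * p n) * p n) atTop (𝓝 0) := by
        have := (hmp.const_mul 2).mul hp_to
        simpa using this
      refine squeeze_zero_norm' ?_ h2lim
      filter_upwards [hplt, hmj] with n hn hjm
      have hp05 : p n ≤ 1/2 := le_of_lt hn
      have habs : |p n| < 1 := by rw [abs_of_nonneg (hp0 n)]; linarith
      have hlog := Real.abs_log_sub_add_sum_range_le habs 1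
      simp only [Finset.sum_range_one, pow_one, Nat.cast_zero, zero_add, div_one] at hlog
      have hlog2 : |Real.log (1 - p n) + p n| ≤ 2 * p n ^ 2 := by
        rw [abs_of_nonneg (hp0 n)] at hlog
        have h1 : (1:ℝ)/2 ≤ 1 - p n := by linarith
        have h2 : p n ^ 2 / (1 - p n) ≤ p n ^ 2 / (1/2) :=
          div_le_div_of_nonneg_left (by positivity) (by norm_num) h1
        calc |Real.log (1 - p n) + p n| = |p n + Real.log (1 - p n)| := by rw [add_comm]
          _ ≤ p n ^ 2 / (1 - p n) := hlog
          _ ≤ p n ^ 2 / (1/2) := h2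
          _ = 2 * p n ^ 2 := by ring
      have hmge : (j : ℝ) ≤ (m n : ℝ) := by exact_mod_cast hjm
      calc ‖((m n : ℝ) - j) * (Real.log (1 - p n) + p n)‖
          = ((m n : ℝ) - j) * |Real.log (1 - p n) + p n| := by
            rw [Real.norm_eq_abs, abs_mul, abs_of_nonneg (by linarith)]
        _ ≤ (m n : ℝ) * (2 * p n ^ 2) := by
            apply mul_le_mul (by linarith) hlog2 (abs_nonneg _)
            positivity
        _ = 2 * ((m n : ℝ) * p n) * p n := by ring
    have hexp : Tendsto (fun n => ((m n - j : ℕ) : ℝ) * Real.log (1 - p n)) atTop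
        (𝓝 (-lam)) := by
      have hjp : Tendsto (fun n => (j : ℝ) * p n) atTop (𝓝 0) := by
        simpa using hp_to.const_mul (j : ℝ)
      have hmain0 : Tendsto (fun n => -((m n : ℝ) * p n - (j : ℝ) * p n)
          + ((m n : ℝ) - j) * (Real.log (1 - p n) + p n)) atTop (𝓝 (-(lam - 0) + 0)) :=
        (hmp.sub hjp).neg.add herr
      have hmain : Tendsto (fun n => -((m n : ℝ) * p n - (j : ℝ) * p n)
          + ((m n : ℝ) - j) * (Real.log (1 - p n) + p n)) atTop (𝓝 (-lam)) := by
        convert hmain0 using 2; ring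
      apply hmain.congr'
      filter_upwards [hmj] with n hjm
      rw [Nat.cast_sub hjm]
      ring
    have hexp2 : Tendsto (fun n => Real.exp (((m n - j : ℕ) : ℝ) * Real.log (1 - p n))) atTop
        (𝓝 (Real.exp (-lam))) := (Real.continuous_exp.tendsto _).comp hexp
    have hfin : Tendsto (fun n =>
        (∏ i ∈ Finset.range j, (((m n : ℝ) - i) * p n)) / (Nat.factorial j : ℝ)
          * Real.exp (((m n - j : ℕ) : ℝ) * Real.log (1 - p n))) atTop
        (𝓝 (lam ^ j / (Nat.factorial j : ℝ) * Real.exp (-lam))) :=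
      (hprod.div_const _).mul hexp2
    have hlimeq : lam ^ j / (Nat.factorial j : ℝ) * Real.exp (-lam)
        = Real.exp (-lam) * lam ^ j / (Nat.factorial j : ℝ) := by ring
    rw [hlimeq] at hfin
    apply hfin.congr'
    filter_upwards [hmj, hplt] with n hjm hn
    have h1p : (0:ℝ) < 1 - p n := by linarith
    have hpow : Real.exp (((m n - j : ℕ) : ℝ) * Real.log (1 - p n)) = (1 - p n) ^ (m n - j) := by
      rw [Real.exp_nat_mul, Real.exp_log h1p]
    have hchoose : (∏ i ∈ Finset.range j, (((m n : ℝ) - i) * p n))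
        = ((m n).choose j : ℝ) * (Nat.factorial j : ℝ) * p n ^ j := by
      rw [Finset.prod_mul_distrib, Finset.prod_const, Finset.card_range]
      congr 1
      have hdesc : ((m n).descFactorial j : ℝ) = ∏ i ∈ Finset.range j, ((m n : ℝ) - i) := by
        rw [Nat.descFactorial_eq_prod_range, Nat.cast_prod]
        refine Finset.prod_congr rfl fun i hi => ?_
        have : i ≤ m n := le_trans (le_of_lt (Finset.mem_range.mp hi)) hjm
        rw [Nat.cast_sub this]
      rw [← hdesc, Nat.descFactorial_eq_factorial_mul_choose, Nat.cast_mul]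
      ring
    rw [hpow, hchoose]
    have hfact : (Nat.factorial j : ℝ) ≠ 0 := Nat.cast_ne_zero.2 (Nat.factorial_ne_zero j)
    field_simp
  -- assemble
  have hev : ∀ᶠ n in atTop, binomTail (m n) (p n) k
      = 1 - ∑ j ∈ Finset.range k, ((m n).choose j : ℝ) * p n ^ j * (1 - p n) ^ (m n - j) := by
    filter_upwards [hm.eventually_ge_atTop k] with n hn
    exact binomTail_eq _ _ _ hn
  have hsum : Tendsto (fun n => 1 - ∑ j ∈ Finset.range k,
      ((m n).choose j : ℝ) * p n ^ j * (1 - p n) ^ (m n - j)) atTop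
      (𝓝 (1 - ∑ j ∈ Finset.range k, Real.exp (-lam) * lam ^ j / (Nat.factorial j : ℝ))) :=
    tendsto_const_nhds.sub (tendsto_finset_sum _ fun j _ => hterm j)
  rw [show poiTail lam k = 1 - ∑ j ∈ Finset.range k,
    Real.exp (-lam) * lam ^ j / (Nat.factorial j : ℝ) from rfl]
  exact Tendsto.congr' (hev.mono fun n h => h.symm) hsum

lemma ball_aeeq_closedBall (x : ℂ) (ρ : ℝ) :
    (Metric.ball x ρ : Set ℂ) =ᵐ[volume] Metric.closedBall x ρ := by
  rw [MeasureTheory.ae_eq_set]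
  constructor
  · rw [Set.diff_eq_empty.2 Metric.ball_subset_closedBall]; simp
  · rw [Metric.closedBall_diff_ball]
    exact Measure.addHaar_sphere volume x ρ

lemma strongMeas_ball_integral (f : ℂ → ℝ) (hmeas : Measurable f) (ρ : ℝ) :
    StronglyMeasurable fun x : ℂ => ∫ z in Metric.ball x ρ, f z := by
  have hset : MeasurableSet {q : ℂ × ℂ | dist q.2 q.1 < ρ} :=
    (isOpen_lt (continuous_snd.dist continuous_fst) continuous_const).measurableSet
  have hF : StronglyMeasurable fun q : ℂ × ℂ =>
      Set.indicator {q : ℂ × ℂ | dist q.2 q.1 < ρ} (fun q => f q.2) q :=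
    ((hmeas.comp measurable_snd).indicator hset).stronglyMeasurable
  have h2 := hF.integral_prod_right' (ν := (volume : Measure ℂ))
  have heq : (fun x : ℂ => ∫ z in Metric.ball x ρ, f z)
      = fun x => ∫ y, Set.indicator {q : ℂ × ℂ | dist q.2 q.1 < ρ} (fun q => f q.2) (x, y) := by
    funext x
    rw [← MeasureTheory.integral_indicator measurableSet_ball]
    refine integral_congr_ae (Filter.Eventually.of_forall fun y => ?_)
    by_cases h : dist y x < ρ <;>
      simp [Set.indicator, Metric.mem_ball, h]
  rw [heq]
  exact h2

lemma continuous_binomTail (m k : ℕ) : Continuous fun p : ℝ => binomTail m p k := by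
  unfold binomTail
  exact continuous_finset_sum _ fun j _ =>
    (continuous_const.mul (continuous_pow j)).mul ((continuous_const.sub continuous_id).pow _)

/-- In-degree analogue of Statement 10: with
`q_n(x,t) = (α/(2π)) F(B(x,r_n(t)))` and `n r_n(t)² = t`, the expected proportion of
vertices in `A` of in-degree at least `k`, namely
`∫_A P[Bin(n-1,q_n(x,t)) ≥ k] f(x) dx`, converges to
`∫_A P[Poi((α/2)tf(x)) ≥ k] f(x) dx`. -/
theorem in_degree_mean_limit (α t : ℝ) (hα : α ∈ Set.Ioc 0 (2 * π)) (ht : 0 < t)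
    (f : ℂ → ℝ) (hmeas : Measurable f) (hnonneg : ∀ x, 0 ≤ f x)
    (C : ℝ) (hbdd : ∀ x, f x ≤ C)
    (hint : Integrable f) (hprob : ∫ x : ℂ, f x = 1)
    (K : ℝ)
    (hR : ∫ x in {x : ℂ | 0 < f x ∧ ∀ᶠ z in nhds x, |f z - f x| ≤ K * dist z x}, f x = 1)
    (A : Set ℂ) (hA : MeasurableSet A) (k : ℕ) :
    Tendsto (fun n : ℕ =>
        ∫ x in A,
          binomTail (n - 1)
            ((α / (2 * π)) * ∫ z in Metric.ball x (Real.sqrt (t / n)), f z) k * f x)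
      atTop (nhds (∫ x in A, poiTail (α / 2 * t * f x) k * f x)) := by
  obtain ⟨hα0, hα2π⟩ := hα
  have hπ := Real.pi_pos
  set c : ℝ := α / (2 * π) with hc
  have hc0 : 0 < c := div_pos hα0 (by linarith)
  have hc1 : c ≤ 1 := by rw [hc, div_le_one (by linarith)]; exact hα2π
  set r : ℕ → ℝ := fun n => Real.sqrt (t / n) with hrdef
  have hrnn : ∀ n, 0 ≤ r n := by rw [hrdef]; exact fun n => Real.sqrt_nonneg _
  have hball0 : ∀ (x : ℂ) (ρ : ℝ), 0 ≤ ∫ z in Metric.ball x ρ, f z := fun x ρ =>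
    setIntegral_nonneg measurableSet_ball fun z _ => hnonneg z
  have hball1 : ∀ (x : ℂ) (ρ : ℝ), (∫ z in Metric.ball x ρ, f z) ≤ 1 := fun x ρ => by
    rw [← hprob]
    exact setIntegral_le_integral hint (Filter.Eventually.of_forall hnonneg)
  set q : ℕ → ℂ → ℝ := fun n x => c * ∫ z in Metric.ball x (r n), f z with hqdef
  have hq0 : ∀ n x, 0 ≤ q n x := fun n x => mul_nonneg hc0.le (hball0 _ _)
  have hq1 : ∀ n x, q n x ≤ 1 := fun n x =>
    le_trans (mul_le_mul hc1 (hball1 _ _) (hball0 _ _) zero_le_one) (by norm_num)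
  have hrpos : ∀ n : ℕ, 1 ≤ n → 0 < r n := fun n hn => by
    have : (0:ℝ) < n := by exact_mod_cast hn
    exact Real.sqrt_pos.2 (div_pos ht this)
  have hr0 : Tendsto r atTop (𝓝[>] 0) := by
    rw [tendsto_nhdsWithin_iff]
    constructor
    · have h1 : Tendsto (fun n : ℕ => t / n) atTop (𝓝 0) := tendsto_const_div_atTop_nhds_zero_nat t
      have h2 := (Real.continuous_sqrt.tendsto 0).comp h1
      rw [Real.sqrt_zero] at h2; exact h2
    · filter_upwards [eventually_ge_atTop 1] with n hn using hrpos n hn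
  -- almost everywhere pointwise convergence
  have hae : ∀ᵐ x : ℂ, Tendsto (fun n => binomTail (n - 1) (q n x) k) atTop
      (𝓝 (poiTail (α / 2 * t * f x) k)) := by
    filter_upwards [IsUnifLocDoublingMeasure.ae_tendsto_average (μ := (volume : Measure ℂ))
      hint.locallyIntegrable 1] with x hx
    have havg : Tendsto (fun n => ⨍ y in Metric.closedBall x (r n), f y) atTop (𝓝 (f x)) :=
      hx (fun _ => x) r hr0 (Filter.Eventually.of_forall fun n =>
        Metric.mem_closedBall_self (by rw [one_mul]; exact hrnn n))
    -- n * q n x → (α/2) t f x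
    have hkey : ∀ n : ℕ, 1 ≤ n →
        (n : ℝ) * q n x = c * π * t * ⨍ y in Metric.closedBall x (r n), f y := by
      intro n hn
      have hn0 : (0:ℝ) < n := by exact_mod_cast hn
      have hvol : (volume (Metric.closedBall x (r n))).toReal = t / n * π := by
        rw [Complex.volume_closedBall]
        rw [ENNReal.toReal_mul, ENNReal.toReal_pow, ENNReal.toReal_ofReal (Real.sqrt_nonneg _)]
        rw [Real.sq_sqrt (le_of_lt (div_pos ht hn0))]
        simp [NNReal.coe_real_pi]
      have hvol0 : (volume (Metric.closedBall x (r n))).toReal ≠ 0 := by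
        rw [hvol]; positivity
      have hib : (∫ z in Metric.ball x (r n), f z)
          = ∫ z in Metric.closedBall x (r n), f z :=
        setIntegral_congr_set (ball_aeeq_closedBall x (r n))
      have hcb : (∫ z in Metric.closedBall x (r n), f z)
          = (volume (Metric.closedBall x (r n))).toReal
            * ⨍ y in Metric.closedBall x (r n), f y := by
        rw [setAverage_eq, smul_eq_mul, ← mul_assoc, Measure.real, mul_inv_cancel₀ hvol0, one_mul]
      rw [hqdef]
      simp only
      rw [hib, hcb, hvol]
      field_simp
    have hlam : Tendsto (fun n : ℕ => (n : ℝ) * q n x) atTop (𝓝 (α / 2 * t * f x)) := by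
      have h1 : Tendsto (fun n => c * π * t * ⨍ y in Metric.closedBall x (r n), f y) atTop
          (𝓝 (c * π * t * f x)) := havg.const_mul _
      have h2 : c * π * t * f x = α / 2 * t * f x := by
        rw [hc]; field_simp
      rw [h2] at h1
      apply h1.congr'
      filter_upwards [eventually_ge_atTop 1] with n hn
      exact (hkey n hn).symm
    have hq_to0 : Tendsto (fun n => q n x) atTop (𝓝 0) := by
      have hninv : Tendsto (fun n : ℕ => ((n : ℝ))⁻¹) atTop (𝓝 0) :=
        tendsto_inv_atTop_zero.comp tendsto_natCast_atTop_atTop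
      have h := hlam.mul hninv
      rw [mul_zero] at h
      apply h.congr'
      filter_upwards [eventually_ge_atTop 1] with n hn
      have hn0 : (n:ℝ) ≠ 0 := by positivity
      field_simp
    have hm1 : Tendsto (fun n : ℕ => ((n - 1 : ℕ) : ℝ) * q n x) atTop
        (𝓝 (α / 2 * t * f x)) := by
      have h := hlam.sub hq_to0
      rw [sub_zero] at h
      apply h.congr'
      filter_upwards [eventually_ge_atTop 1] with n hn
      rw [Nat.cast_sub hn, Nat.cast_one]
      ring
    exact binomTail_tendsto_poiTail _ k (fun n => n - 1) (tendsto_sub_atTop_nat 1)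
      (fun n => q n x) (fun n => hq0 n x) hm1
  -- dominated convergence
  refine tendsto_integral_of_dominated_convergence f ?_ ?_ ?_ ?_
  · intro n
    exact ((((continuous_binomTail (n-1) k).measurable.comp
      ((strongMeas_ball_integral f hmeas (r n)).measurable.const_mul c)).mul
        hmeas)).aestronglyMeasurable
  · exact hint.integrableOn
  · intro n
    apply Filter.Eventually.of_forall
    intro x
    rw [norm_mul, Real.norm_eq_abs, Real.norm_eq_abs,
      abs_of_nonneg (binomTail_nonneg _ (hq0 n x) (hq1 n x) k), abs_of_nonneg (hnonneg x)]
    exact mul_le_of_le_one_left (hnonneg x) (binomTail_le_one _ (hq0 n x) (hq1 n x) k)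
  · exact ae_restrict_of_ae (hae.mono fun x hx => hx.mul_const (f x))
end

section
/- Fix x ∈ ℝ² at which f is positive and locally Lipschitz (x ∈ R), with r_n → 0 and n r_n² = s(k_n + t√k_n) where k_n → ∞ and k_n/√n → 0. If s f(x) = 2/α (i.e., x ∈ L_s), then n · F(S(x,y,r_n)) = k_n + t√k_n + o(√k_n) as n → ∞, uniformly in the inclination y. -/
open Real MeasureTheory Filter

/-- The circular sector with apex `x`, radius `r`, central angle `α` and inclination `y`
(the plane being modeled as `ℂ` with the Euclidean distance). -/
noncomputable def sector (α : ℝ) (x : ℂ) (y r : ℝ) : Set ℂ :=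
  {z : ℂ | dist z x < r ∧
    ∃ θ ∈ Set.Icc y (y + α), z - x = ((‖z - x‖ : ℝ) : ℂ) * Complex.exp (θ * Complex.I)}

private lemma sqrt_tendsto_atTop' : Tendsto Real.sqrt atTop atTop :=
  tendsto_atTop_atTop_of_monotone (fun _ _ h => Real.sqrt_le_sqrt h)
    (fun b => ⟨(b ⊔ 0) ^ 2, by rw [Real.sqrt_sq (le_max_right b 0)]; exact le_max_left b 0⟩)

/-- The centered sector is described by modulus and argument. -/
private lemma sector_centered {α : ℝ} (hα : α ∈ Set.Ioc 0 (2 * π)) (r : ℝ) :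
    sector α 0 (-(α / 2)) r
      = {z : ℂ | ‖z‖ < r ∧ Complex.arg z ∈ Set.Icc (-(α / 2)) (α / 2)} := by
  have hα0 : 0 < α := hα.1
  have hα2 : α / 2 ≤ π := by nlinarith [hα.2, Real.pi_pos]
  ext z
  simp only [sector, Set.mem_setOf_eq, sub_zero, Complex.dist_eq]
  constructor
  · rintro ⟨habs, θ, hθ, hz⟩
    have hθ' : θ ∈ Set.Icc (-(α / 2)) (α / 2) := ⟨hθ.1, by have := hθ.2; linarith⟩
    refine ⟨habs, ?_⟩
    rcases eq_or_ne z 0 with rfl | hz0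
    · simp only [Complex.arg_zero, Set.mem_Icc]
      constructor <;> nlinarith
    · have habs0 : 0 < ‖z‖ := norm_pos_iff.mpr hz0
      have harg : Complex.arg z
          = Complex.arg (Complex.cos θ + Complex.sin θ * Complex.I) := by
        conv_lhs => rw [hz]
        rw [Complex.exp_mul_I]
        exact Complex.arg_real_mul _ habs0
      by_cases hcase : -π < θ
      · rw [harg, Complex.arg_cos_add_sin_mul_I ⟨hcase, le_trans hθ'.2 hα2⟩]
        exact hθ'
      · have hθpi : θ = -π :=
          le_antisymm (not_lt.1 hcase) (le_trans (neg_le_neg hα2) hθ'.1)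
        have hπα : π ≤ α / 2 := by
          have h1 := hθ'.1; rw [hθpi] at h1; linarith
        have hargz : Complex.arg z = π := by
          rw [harg, hθpi]
          push_cast
          rw [Complex.cos_neg, Complex.sin_neg, Complex.cos_pi, Complex.sin_pi]
          norm_num [Complex.arg_neg_one]
        rw [hargz]
        exact ⟨by linarith [Real.pi_pos], hπα⟩
  · rintro ⟨habs, hargz⟩
    refine ⟨habs, Complex.arg z, ?_, (Complex.norm_mul_exp_arg_mul_I z).symm⟩
    constructor
    · exact hargz.1
    · have := hargz.2; linarith

private lemma measurableSet_sectorC {α r : ℝ} :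
    MeasurableSet {z : ℂ | ‖z‖ < r ∧ Complex.arg z ∈ Set.Icc (-(α / 2)) (α / 2)} := by
  have h1 : MeasurableSet {z : ℂ | ‖z‖ < r} :=
    (isOpen_lt continuous_norm continuous_const).measurableSet
  have h2 : MeasurableSet (Complex.arg ⁻¹' Set.Icc (-(α / 2)) (α / 2)) :=
    Complex.measurable_arg measurableSet_Icc
  exact h1.inter h2

private lemma volume_sectorC {α : ℝ} (hα : α ∈ Set.Ioc 0 (2 * π)) {r : ℝ} (hr : 0 ≤ r) :
    volume {z : ℂ | ‖z‖ < r ∧ Complex.arg z ∈ Set.Icc (-(α / 2)) (α / 2)}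
      = ENNReal.ofReal (α / 2 * r ^ 2) := by
  have hα0 : 0 < α := hα.1
  have hα2 : α / 2 ≤ π := by nlinarith [hα.2, Real.pi_pos]
  set S : Set ℂ := {z : ℂ | ‖z‖ < r ∧ Complex.arg z ∈ Set.Icc (-(α / 2)) (α / 2)}
    with hS
  have hSm : MeasurableSet S := measurableSet_sectorC
  have hfin : volume S < ⊤ := by
    refine lt_of_le_of_lt (measure_mono ?_) (measure_ball_lt_top (x := (0 : ℂ)) (r := r))
    intro z hz
    simpa [Metric.mem_ball, Complex.dist_eq] using hz.1
  have key : (∫ z : ℂ, S.indicator (fun _ => (1 : ℝ)) z) = α / 2 * r ^ 2 := by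
    rw [← Complex.integral_comp_polarCoord_symm]
    have heq : Set.EqOn (fun p : ℝ × ℝ => p.1 • S.indicator (fun _ => (1 : ℝ))
          (Complex.polarCoord.symm p))
        ((Set.Ioo 0 r ×ˢ Set.Icc (-(α / 2)) (α / 2)).indicator (fun q : ℝ × ℝ => q.1))
        polarCoord.target := by
      rintro ⟨ρ, θ⟩ hp
      rw [polarCoord_target] at hp
      obtain ⟨hρ, hθ⟩ := hp
      rw [Set.mem_Ioi] at hρ
      have hsymm : Complex.polarCoord.symm (ρ, θ) ∈ S ↔
          (ρ < r ∧ θ ∈ Set.Icc (-(α / 2)) (α / 2)) := by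
        rw [hS]
        have habs : ‖Complex.polarCoord.symm (ρ, θ)‖ = ρ := by
          rw [Complex.norm_polarCoord_symm]; exact abs_of_pos hρ
        have harg : Complex.arg (Complex.polarCoord.symm (ρ, θ)) = θ := by
          rw [Complex.polarCoord_symm_apply, Complex.ofReal_cos, Complex.ofReal_sin]
          exact (Complex.arg_real_mul _ hρ).trans
            (Complex.arg_cos_add_sin_mul_I ⟨hθ.1, hθ.2.le⟩)
        simp only [Set.mem_setOf_eq, habs, harg]
      by_cases hmem : ρ < r ∧ θ ∈ Set.Icc (-(α / 2)) (α / 2)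
      · simp only
        rw [Set.indicator_of_mem (hsymm.2 hmem),
          Set.indicator_of_mem (show ((ρ, θ) : ℝ × ℝ) ∈ Set.Ioo 0 r ×ˢ Set.Icc (-(α / 2)) (α / 2) from ⟨⟨hρ, hmem.1⟩, hmem.2⟩), smul_eq_mul, mul_one]
      · simp only
        rw [Set.indicator_of_notMem (fun h => hmem (hsymm.1 h)),
          Set.indicator_of_notMem (fun h => hmem ⟨(Set.mem_prod.1 h).1.2,
            (Set.mem_prod.1 h).2⟩), smul_zero]
    rw [setIntegral_congr_fun polarCoord.open_target.measurableSet heq,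
      setIntegral_indicator (measurableSet_Ioo.prod measurableSet_Icc)]
    have hset : polarCoord.target ∩ (Set.Ioo 0 r ×ˢ Set.Icc (-(α / 2)) (α / 2))
        = Set.Ioo 0 r ×ˢ (Set.Ioo (-π) π ∩ Set.Icc (-(α / 2)) (α / 2)) := by
      rw [polarCoord_target, Set.prod_inter_prod]
      congr 1
      ext a
      simp only [Set.mem_inter_iff, Set.mem_Ioi, Set.mem_Ioo]
      tauto
    rw [hset]
    have hvolθ : volume (Set.Ioo (-π) π ∩ Set.Icc (-(α / 2)) (α / 2))
        = ENNReal.ofReal α := by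
      apply le_antisymm
      · refine (measure_mono Set.inter_subset_right).trans ?_
        rw [Real.volume_Icc]
        apply le_of_eq
        congr 1
        ring
      · refine le_trans ?_ (measure_mono (Set.subset_inter
          (Set.Ioo_subset_Ioo (by linarith) hα2) Set.Ioo_subset_Icc_self))
        rw [Real.volume_Ioo]
        apply le_of_eq
        congr 1
        ring
    have hx : (∫ x in Set.Ioo (0 : ℝ) r, x) = r ^ 2 / 2 := by
      rw [← integral_Ioc_eq_integral_Ioo, ← intervalIntegral.integral_of_le hr,
        integral_id]
      ring
    calc (∫ p in Set.Ioo 0 r ×ˢ (Set.Ioo (-π) π ∩ Set.Icc (-(α / 2)) (α / 2)),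
            (p.1 : ℝ))
        = (∫ x in Set.Ioo (0 : ℝ) r, x) *
            ∫ y in Set.Ioo (-π) π ∩ Set.Icc (-(α / 2)) (α / 2), (1 : ℝ) := by
          rw [Measure.volume_eq_prod,
            ← setIntegral_prod_mul (fun x : ℝ => x) (fun _ : ℝ => (1 : ℝ))]
          simp only [mul_one]
      _ = α / 2 * r ^ 2 := by
          rw [hx, setIntegral_const, measureReal_def, hvolθ, ENNReal.toReal_ofReal hα0.le, smul_eq_mul,
            mul_one]
          ring
  have htoReal : (volume S).toReal = α / 2 * r ^ 2 := by
    rw [← key]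
    exact (integral_indicator_one hSm).symm
  rw [← htoReal, ENNReal.ofReal_toReal hfin.ne]

private lemma rot_eq (c θ m : ℝ) (w : ℂ)
    (h : w = (m : ℂ) * Complex.exp ((θ : ℂ) * Complex.I)) :
    Complex.exp ((c : ℂ) * Complex.I) * w
      = (m : ℂ) * Complex.exp (((θ + c : ℝ) : ℂ) * Complex.I) := by
  rw [h, mul_left_comm, ← Complex.exp_add]
  congr 2
  push_cast
  ring

/-- Every sector is the preimage of the corresponding centered sector under a
translation followed by a rotation. -/
private lemma sector_preimage (α : ℝ) (x : ℂ) (y r : ℝ) :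
    sector α x y r
      = (fun z : ℂ => (Circle.exp (-(y + α / 2)) : ℂ) * (z - x)) ⁻¹'
          sector α 0 (-(α / 2)) r := by
  set c : ℝ := -(y + α / 2) with hc
  ext z
  have habs : ‖(Circle.exp c : ℂ) * (z - x)‖ = ‖z - x‖ := by
    rw [norm_mul, Circle.norm_coe, one_mul]
  simp only [sector, Set.mem_preimage, Set.mem_setOf_eq, sub_zero, Complex.dist_eq, habs]
  constructor
  · rintro ⟨hd, θ, hθ, hz⟩
    refine ⟨hd, θ + c, ⟨?_, ?_⟩, ?_⟩
    · simp only [hc]; linarith [hθ.1]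
    · simp only [hc]; linarith [hθ.2]
    · rw [Circle.coe_exp]
      exact rot_eq c θ _ _ hz
  · rintro ⟨hd, φ, hφ, hz⟩
    rw [Circle.coe_exp] at hz
    have h3 := rot_eq (-c) φ (‖z - x‖) _ hz
    have h5 : Complex.exp (((-c : ℝ) : ℂ) * Complex.I) *
        (Complex.exp ((c : ℂ) * Complex.I) * (z - x)) = z - x := by
      rw [← mul_assoc, ← Complex.exp_add,
        show ((-c : ℝ) : ℂ) * Complex.I + (c : ℂ) * Complex.I = 0 by push_cast; ring,
        Complex.exp_zero, one_mul]
    refine ⟨hd, φ - c, ⟨?_, ?_⟩, ?_⟩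
    · simp only [hc] at hφ ⊢; linarith [hφ.1]
    · simp only [hc] at hφ ⊢; linarith [hφ.2]
    · simpa [sub_eq_add_neg] using h5.symm.trans h3


private lemma measurableSet_sector {α : ℝ} (hα : α ∈ Set.Ioc 0 (2 * π)) (x : ℂ) (y r : ℝ) :
    MeasurableSet (sector α x y r) := by
  rw [sector_preimage, sector_centered hα]
  have hcont : Continuous fun z : ℂ => (Circle.exp (-(y + α / 2)) : ℂ) * (z - x) :=
    continuous_const.mul (continuous_id.sub continuous_const)
  exact hcont.measurable measurableSet_sectorC

private lemma volume_sector {α : ℝ} (hα : α ∈ Set.Ioc 0 (2 * π)) (x : ℂ) (y : ℝ) {r : ℝ}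
    (hr : 0 ≤ r) :
    volume (sector α x y r) = ENNReal.ofReal (α / 2 * r ^ 2) := by
  rw [sector_preimage, sector_centered hα]
  have h1 : MeasurePreserving (fun z : ℂ => z - x) volume volume := by
    simpa [sub_eq_add_neg] using measurePreserving_add_right (volume : Measure ℂ) (-x)
  have h2 : MeasurePreserving (fun z : ℂ => (Circle.exp (-(y + α / 2)) : ℂ) * z)
      volume volume := by
    have h2' := (rotation (Circle.exp (-(y + α / 2)))).measurePreserving
    have hfun : ⇑(rotation (Circle.exp (-(y + α / 2))))
        = fun z : ℂ => (Circle.exp (-(y + α / 2)) : ℂ) * z :=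
      funext fun z => rotation_apply _ z
    rwa [hfun] at h2'
  have h3 : MeasurePreserving (fun z : ℂ => (Circle.exp (-(y + α / 2)) : ℂ) * (z - x))
      volume volume := h2.comp h1
  rw [h3.measure_preimage measurableSet_sectorC.nullMeasurableSet]
  exact volume_sectorC hα hr

private lemma sq_identity {sr t u v : ℝ} (hu : 0 < u) (hv : 0 < v) (hut : 0 ≤ u + t)
    (hs : 0 ≤ sr) :
    ((u + t) * Real.sqrt (sr * (u * u + t * u) / (v * v))) ^ 2
      = sr * ((u * u) / v) ^ 2 * (1 + t / u) ^ 3 := by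
  have h0 : 0 ≤ u * u + t * u := by nlinarith
  have h1 : 0 ≤ sr * (u * u + t * u) / (v * v) := by positivity
  rw [mul_pow, Real.sq_sqrt h1]
  field_simp

/-- Fix `x` at which the density `f` is positive and locally Lipschitz,
with `n r_n² = s(k_n + t√k_n)`, `k_n → ∞`, `k_n/√n → 0`. If `s f(x) = 2/α` (i.e. `x` lies
on the level set `L_s`), then `n F(S(x,y,r_n)) = k_n + t√k_n + o(√k_n)`, uniformly in the
inclination `y`. -/
theorem sector_measure_on_level_set (α s t : ℝ) (hα : α ∈ Set.Ioc 0 (2 * π)) (hs : 0 < s)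
    (f : ℂ → ℝ) (hmeas : Measurable f) (hnonneg : ∀ z, 0 ≤ f z) (hint : Integrable f)
    (x : ℂ) (hfx : 0 < f x) (K : ℝ)
    (hlip : ∀ᶠ z in nhds x, |f z - f x| ≤ K * dist z x)
    (hLs : s * f x = 2 / α)
    (k : ℕ → ℝ) (hkpos : ∀ n, 0 < k n)
    (hk : Tendsto k atTop atTop)
    (hko : Tendsto (fun n => k n / Real.sqrt n) atTop (nhds 0)) :
    ∃ e : ℕ → ℝ,
      Tendsto (fun n => e n / Real.sqrt (k n)) atTop (nhds 0) ∧
      ∀ n : ℕ, ∀ y : ℝ,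
        |(n : ℝ) *
            (∫ z in sector α x y (Real.sqrt (s * (k n + t * Real.sqrt (k n)) / n)), f z) -
          (k n + t * Real.sqrt (k n))| ≤ e n := by
  obtain ⟨hα0, hα2π⟩ := hα
  obtain ⟨δ, hδ0, hδ⟩ := Metric.eventually_nhds_iff.1 hlip
  have hK : 0 ≤ K := by
    have hdist : dist (x + (↑(δ / 2) : ℂ)) x = δ / 2 := by
      rw [Complex.dist_eq, add_sub_cancel_left, Complex.norm_real, Real.norm_eq_abs, abs_of_pos (by linarith)]
    have h1 := hδ (show dist (x + (↑(δ / 2) : ℂ)) x < δ by rw [hdist]; linarith)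
    rw [hdist] at h1
    nlinarith [abs_nonneg (f (x + (↑(δ / 2) : ℂ)) - f x)]
  set R : ℕ → ℝ := fun n => Real.sqrt (s * (k n + t * Real.sqrt (k n)) / n) with hR
  set c : ℕ → ℝ := fun n => k n + t * Real.sqrt (k n) with hcdef
  set E : ℕ → ℝ → ℝ :=
    fun n y => |(n : ℝ) * (∫ z in sector α x y (R n), f z) - c n| with hE
  have hIf : ∀ n y, 0 ≤ ∫ z in sector α x y (R n), f z := fun n y =>
    setIntegral_nonneg (measurableSet_sector ⟨hα0, hα2π⟩ x y (R n)) (fun z _ => hnonneg z)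
  have hIle : ∀ n y, (∫ z in sector α x y (R n), f z) ≤ ∫ z, f z := fun n y =>
    setIntegral_le_integral hint (Eventually.of_forall hnonneg)
  have hBdd : ∀ n, BddAbove (Set.range (E n)) := by
    intro n
    refine ⟨(n : ℝ) * (∫ z, f z) + |c n|, ?_⟩
    rintro _ ⟨y, rfl⟩
    simp only [hE]
    calc |(n : ℝ) * (∫ z in sector α x y (R n), f z) - c n|
        ≤ |(n : ℝ) * ∫ z in sector α x y (R n), f z| + |c n| := abs_sub _ _
      _ ≤ (n : ℝ) * (∫ z, f z) + |c n| := by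
          rw [abs_of_nonneg (mul_nonneg (Nat.cast_nonneg n) (hIf n y))]
          exact add_le_add_left
            (mul_le_mul_of_nonneg_left (hIle n y) (Nat.cast_nonneg n : (0 : ℝ) ≤ n)) _
  have hE0 : ∀ n y, 0 ≤ E n y := fun n y => abs_nonneg _
  have hsqrtk : Tendsto (fun n => Real.sqrt (k n)) atTop atTop := sqrt_tendsto_atTop'.comp hk
  have hts : Tendsto (fun n => t / Real.sqrt (k n)) atTop (nhds 0) :=
    Tendsto.div_atTop tendsto_const_nhds hsqrtk
  -- The key quantity `(√kₙ + t) · Rₙ` tends to 0.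
  have hW : Tendsto (fun n => (Real.sqrt (k n) + t) * R n) atTop (nhds 0) := by
    have hform : ∀ᶠ n in atTop, ((Real.sqrt (k n) + t) * R n) ^ 2
        = s * (k n / Real.sqrt n) ^ 2 * (1 + t / Real.sqrt (k n)) ^ 3 := by
      filter_upwards [eventually_ge_atTop 1, hsqrtk.eventually_ge_atTop (max 1 (-t))]
        with n hn1 hnt
      have hkn := hkpos n
      have hu : 0 < Real.sqrt (k n) := Real.sqrt_pos.2 hkn
      have hut : 0 ≤ Real.sqrt (k n) + t := by
        have := le_trans (le_max_right 1 (-t)) hnt; linarith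
      have hn0 : (0 : ℝ) < n := Nat.cast_pos.mpr hn1
      have hvn : 0 < Real.sqrt n := Real.sqrt_pos.2 hn0
      have hkk : Real.sqrt (k n) * Real.sqrt (k n) = k n := Real.mul_self_sqrt hkn.le
      have hnn : Real.sqrt n * Real.sqrt n = (n : ℝ) := Real.mul_self_sqrt hn0.le
      have e2 : R n = Real.sqrt (s * (Real.sqrt (k n) * Real.sqrt (k n)
          + t * Real.sqrt (k n)) / (Real.sqrt n * Real.sqrt n)) := by
        simp only [hR]
        exact congrArg Real.sqrt (by rw [hkk, hnn])
      rw [e2, sq_identity hu hvn hut hs.le, hkk]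
    have h2 : Tendsto (fun n => s * (k n / Real.sqrt n) ^ 2 * (1 + t / Real.sqrt (k n)) ^ 3)
        atTop (nhds (s * 0 ^ 2 * (1 + 0) ^ 3)) :=
      (tendsto_const_nhds.mul (hko.pow 2)).mul ((tendsto_const_nhds.add hts).pow 3)
    norm_num at h2
    have hsq : Tendsto (fun n => ((Real.sqrt (k n) + t) * R n) ^ 2) atTop (nhds 0) :=
      Tendsto.congr' (hform.mono fun _ h => h.symm) h2
    have hsqrt0 : Tendsto (fun n => Real.sqrt (((Real.sqrt (k n) + t) * R n) ^ 2))
        atTop (nhds 0) := by simpa using hsq.sqrt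
    refine squeeze_zero_norm (fun n => ?_) hsqrt0
    rw [Real.norm_eq_abs, ← Real.sqrt_sq_eq_abs]
  -- hence `Rₙ → 0`
  have hRto : Tendsto R atTop (nhds 0) := by
    refine squeeze_zero' (Eventually.of_forall fun n => by
      simp only [hR]; exact Real.sqrt_nonneg _) ?_ hW
    filter_upwards [hsqrtk.eventually_ge_atTop (1 - t)] with n hn
    have h1 : 1 ≤ Real.sqrt (k n) + t := by linarith
    have h0 : 0 ≤ R n := by simp only [hR]; exact Real.sqrt_nonneg _
    nlinarith
  -- the main estimate, eventually in `n`, uniformly in `y`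
  have hbound : ∀ᶠ n in atTop, ∀ y, E n y ≤ K * (α / 2) * s * c n * R n := by
    filter_upwards [eventually_ge_atTop 1, hsqrtk.eventually_gt_atTop (max 0 (-t)),
      hRto.eventually (gt_mem_nhds hδ0)] with n hn1 hnt hRδ
    intro y
    have hkn := hkpos n
    have hu : 0 < Real.sqrt (k n) := lt_of_le_of_lt (le_max_left 0 (-t)) hnt
    have hut : 0 < Real.sqrt (k n) + t := by
      have := lt_of_le_of_lt (le_max_right 0 (-t)) hnt; linarith
    have hkk : Real.sqrt (k n) * Real.sqrt (k n) = k n := Real.mul_self_sqrt hkn.le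
    have hc0 : 0 < c n := by simp only [hcdef]; nlinarith
    have hn0 : (0 : ℝ) < n := Nat.cast_pos.mpr hn1
    have hR0 : 0 ≤ R n := by simp only [hR]; exact Real.sqrt_nonneg _
    have hR2 : (n : ℝ) * R n ^ 2 = s * c n := by
      simp only [hR, hcdef]
      rw [Real.sq_sqrt (by simp only [hcdef] at hc0; positivity)]
      field_simp
    have hSm : MeasurableSet (sector α x y (R n)) :=
      measurableSet_sector ⟨hα0, hα2π⟩ x y (R n)
    have hvol : volume (sector α x y (R n)) = ENNReal.ofReal (α / 2 * R n ^ 2) :=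
      volume_sector ⟨hα0, hα2π⟩ x y hR0
    have hfin : volume (sector α x y (R n)) < ⊤ := by
      rw [hvol]; exact ENNReal.ofReal_lt_top
    have hvolR : (volume (sector α x y (R n))).toReal = α / 2 * R n ^ 2 := by
      rw [hvol, ENNReal.toReal_ofReal (by positivity)]
    have hint1 : IntegrableOn f (sector α x y (R n)) := hint.integrableOn
    have hint2 : IntegrableOn (fun _ => f x) (sector α x y (R n)) volume :=
      integrableOn_const hfin.ne
    have hsplit : (∫ z in sector α x y (R n), (f z - f x))
        = (∫ z in sector α x y (R n), f z) - α / 2 * R n ^ 2 * f x := by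
      rw [integral_sub hint1 hint2, setIntegral_const, measureReal_def, hvolR, smul_eq_mul]
    have hfx' : α / 2 * f x = 1 / s := by
      have hα0' : α ≠ 0 := ne_of_gt hα0
      have h2 : s * f x * α = 2 := by
        field_simp at hLs
        linarith
      field_simp
      nlinarith [h2]
    have hcancel : (n : ℝ) * (α / 2 * R n ^ 2 * f x) = c n := by
      calc (n : ℝ) * (α / 2 * R n ^ 2 * f x)
          = ((n : ℝ) * R n ^ 2) * (α / 2 * f x) := by ring
        _ = (s * c n) * (1 / s) := by rw [hR2, hfx']
        _ = c n := by field_simp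
    have hest : |∫ z in sector α x y (R n), (f z - f x)|
        ≤ (K * R n) * (volume (sector α x y (R n))).toReal := by
      have h3 : ∀ z ∈ sector α x y (R n), ‖f z - f x‖ ≤ K * R n := by
        intro z hz
        have hzx : dist z x < R n := hz.1
        have h1 := hδ (lt_trans hzx hRδ)
        rw [Real.norm_eq_abs]
        exact h1.trans (mul_le_mul_of_nonneg_left hzx.le hK)
      have := norm_setIntegral_le_of_norm_le_const hfin h3
      rw [measureReal_def] at this
      simpa [Real.norm_eq_abs] using this
    have hEeq : E n y = (n : ℝ) * |∫ z in sector α x y (R n), (f z - f x)| := by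
      simp only [hE]
      have h4 : (n : ℝ) * (∫ z in sector α x y (R n), f z) - c n
          = (n : ℝ) * ∫ z in sector α x y (R n), (f z - f x) := by
        rw [hsplit, ← hcancel]; ring
      rw [h4, abs_mul, Nat.abs_cast]
    rw [hEeq]
    calc (n : ℝ) * |∫ z in sector α x y (R n), (f z - f x)|
        ≤ (n : ℝ) * ((K * R n) * (α / 2 * R n ^ 2)) := by
          refine mul_le_mul_of_nonneg_left ?_ (Nat.cast_nonneg n)
          rw [← hvolR]; exact hest
      _ = K * (α / 2) * ((n : ℝ) * R n ^ 2) * R n := by ring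
      _ = K * (α / 2) * s * c n * R n := by rw [hR2]; ring
  refine ⟨fun n => ⨆ y, E n y, ?_, fun n y => le_ciSup (hBdd n) y⟩
  -- the normalized error tends to 0
  have hupper : ∀ᶠ n in atTop, (⨆ y, E n y) / Real.sqrt (k n)
      ≤ (K * (α / 2) * s) * ((Real.sqrt (k n) + t) * R n) := by
    filter_upwards [hbound, hsqrtk.eventually_gt_atTop (max 0 (-t))] with n hb hnt
    have hu : 0 < Real.sqrt (k n) := lt_of_le_of_lt (le_max_left 0 (-t)) hnt
    have hkk : Real.sqrt (k n) * Real.sqrt (k n) = k n := Real.mul_self_sqrt (hkpos n).le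
    have hEsup : (⨆ y, E n y) ≤ K * (α / 2) * s * c n * R n := ciSup_le hb
    have hident : K * (α / 2) * s * c n * R n / Real.sqrt (k n)
        = (K * (α / 2) * s) * ((Real.sqrt (k n) + t) * R n) := by
      simp only [hcdef]
      rw [show k n + t * Real.sqrt (k n)
          = Real.sqrt (k n) * (Real.sqrt (k n) + t) by linear_combination -hkk]
      field_simp
    calc (⨆ y, E n y) / Real.sqrt (k n)
        ≤ (K * (α / 2) * s * c n * R n) / Real.sqrt (k n) :=
          (div_le_div_iff_of_pos_right hu).2 hEsup
      _ = (K * (α / 2) * s) * ((Real.sqrt (k n) + t) * R n) := hident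
  have hub : Tendsto (fun n => (K * (α / 2) * s) * ((Real.sqrt (k n) + t) * R n))
      atTop (nhds 0) := by
    simpa using tendsto_const_nhds.mul hW
  refine squeeze_zero' (Eventually.of_forall fun n => ?_) hupper hub
  exact div_nonneg ((hE0 n 0).trans (le_ciSup (hBdd n) 0)) (Real.sqrt_nonneg _)
end
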